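/- arXiv:1308.2520 — 10 statements merged into one kernel-verified Lean document; each statement's English description precedes it below -/
import Mathlib

section
/- Let A₁, A₂ be convex subsets of a Banach space X with 0 ∈ A₁ ∩ A₂. Then (A₁ + A₂)° = A₁° # A₂°, where for convex sets B₁, B₂ in X* containing 0, B₁ # B₂ := (⋃_{0<t<1} (t·B₁ ∩ (1−t)·B₂)) ∪ (B₁ ∩ 0⁺B₂) ∪ (B₂ ∩ 0⁺B₁). -/
open Set Metric
open scoped Pointwise

noncomputable section

/-- The recession cone `0⁺A = {x | A + t • x ⊆ A for all t ≥ 0}`. -/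
def recCone {X : Type*} [AddCommGroup X] [Module ℝ X] (A : Set X) : Set X :=
  {x | ∀ t : ℝ, 0 ≤ t → ∀ a ∈ A, a + t • x ∈ A}

/-- The inverse sum `B₁ # B₂`. -/
def invSum {X : Type*} [AddCommGroup X] [Module ℝ X] (B₁ B₂ : Set X) : Set X :=
  (⋃ t ∈ Set.Ioo (0:ℝ) 1, (t • B₁ ∩ (1 - t) • B₂)) ∪ (B₁ ∩ recCone B₂) ∪ (B₂ ∩ recCone B₁)

/-- The polar `A° = {x* | ⟨x*, x⟩ ≤ 1 ∀ x ∈ A}` of a set in `X`, a subset of the dual. -/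
def pol {X : Type*} [NormedAddCommGroup X] [NormedSpace ℝ X] (A : Set X) :
    Set (X →L[ℝ] ℝ) := {f | ∀ x ∈ A, f x ≤ 1}

/-- The dual cone (negative polar) `A^⊖ = {x* | ⟨x*, x⟩ ≤ 0 ∀ x ∈ A}`. -/
def dCone {X : Type*} [NormedAddCommGroup X] [NormedSpace ℝ X] (A : Set X) :
    Set (X →L[ℝ] ℝ) := {f | ∀ x ∈ A, f x ≤ 0}

/-- The weak* closure of a set of continuous linear functionals. -/
def wcl {X : Type*} [NormedAddCommGroup X] [NormedSpace ℝ X]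
    (S : Set (X →L[ℝ] ℝ)) : Set (X →L[ℝ] ℝ) :=
  {f | StrongDual.toWeakDual (𝕜 := ℝ) (E := X) f ∈
    closure (StrongDual.toWeakDual (𝕜 := ℝ) (E := X) '' S)}

/-- The set of all finite sums `Σ_{i ∈ I₀} x_i` with `x_i ∈ P i`, `I₀ ⊆ I` finite. -/
def finSums {X : Type*} [NormedAddCommGroup X] [NormedSpace ℝ X] {I : Type*}
    (P : I → Set (X →L[ℝ] ℝ)) : Set (X →L[ℝ] ℝ) :=
  {g | ∃ (s : Finset I) (x : I → (X →L[ℝ] ℝ)), (∀ i ∈ s, x i ∈ P i) ∧ g = ∑ i ∈ s, x i}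

/-- The extended Jameson property `(G_η)`: every `f` in the weak* closure of the set of
finite sums of the `P i` is a weak* limit (i.e. lies in the weak* closure) of finite sums
`Σ_{i ∈ s} x_i`, `x_i ∈ P i`, with `Σ_{i ∈ s} ‖x_i‖ ≤ (1/η) ‖f‖`. -/
def propG {X : Type*} [NormedAddCommGroup X] [NormedSpace ℝ X] {I : Type*}
    (P : I → Set (X →L[ℝ] ℝ)) (η : ℝ) : Prop :=
  ∀ f ∈ wcl (finSums P),
    f ∈ wcl {g | ∃ (s : Finset I) (x : I → (X →L[ℝ] ℝ)),
      (∀ i ∈ s, x i ∈ P i) ∧ g = ∑ i ∈ s, x i ∧ ∑ i ∈ s, ‖x i‖ ≤ (1 / η) * ‖f‖}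

/-- The normal cone `N(C, x) = {x* | ⟨x*, c − x⟩ ≤ 0 ∀ c ∈ C}`. -/
def ncone {X : Type*} [NormedAddCommGroup X] [NormedSpace ℝ X] (C : Set X) (x : X) :
    Set (X →L[ℝ] ℝ) := {f | ∀ c ∈ C, f (c - x) ≤ 0}

/-- The conical hull of a convex set `S`: `cone S = {t • s | t ≥ 0, s ∈ S}`. -/
def coneHull {X : Type*} [AddCommGroup X] [Module ℝ X] (S : Set X) : Set X :=
  {y | ∃ t : ℝ, 0 ≤ t ∧ ∃ s ∈ S, y = t • s}

end

lemma recCone_pol_nonpos {X : Type*} [NormedAddCommGroup X] [NormedSpace ℝ X]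
    {A : Set X} {f : X →L[ℝ] ℝ} (hf : f ∈ recCone (pol A)) : ∀ b ∈ A, f b ≤ 0 := by
  intro b hb
  have hz : (0 : X →L[ℝ] ℝ) ∈ pol A := fun x _ => by simp
  have key : ∀ t : ℝ, 0 ≤ t → t * f b ≤ 1 := by
    intro t ht
    have := hf t ht 0 hz b hb
    simpa using this
  by_contra hc
  push_neg at hc
  have h2 : (2 / f b) * f b ≤ 1 := key _ (by positivity)
  rw [div_mul_cancel₀ _ (ne_of_gt hc)] at h2
  linarith

theorem stmt5 {X : Type*} [NormedAddCommGroup X] [NormedSpace ℝ X] [CompleteSpace X]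
    (A₁ A₂ : Set X) (h₁ : Convex ℝ A₁) (h₂ : Convex ℝ A₂)
    (h0₁ : (0 : X) ∈ A₁) (h0₂ : (0 : X) ∈ A₂) :
    pol (A₁ + A₂) = invSum (pol A₁) (pol A₂) := by
  ext f
  constructor
  · intro hf
    have hfa : ∀ a ∈ A₁, f a ≤ 1 := fun a ha => by
      have := hf (a + 0) (Set.add_mem_add ha h0₂); simpa using this
    have hfb : ∀ b ∈ A₂, f b ≤ 1 := fun b hb => by
      have := hf (0 + b) (Set.add_mem_add h0₁ hb); simpa using this
    have hfab : ∀ a ∈ A₁, ∀ b ∈ A₂, f a + f b ≤ 1 := fun a ha b hb => by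
      have := hf (a + b) (Set.add_mem_add ha hb); simpa [map_add] using this
    set s₁ := sSup (f '' A₁) with hs₁def
    set s₂ := sSup (f '' A₂) with hs₂def
    have hne₁ : (f '' A₁).Nonempty := ⟨f 0, ⟨0, h0₁, rfl⟩⟩
    have hne₂ : (f '' A₂).Nonempty := ⟨f 0, ⟨0, h0₂, rfl⟩⟩
    have hbdd₁ : BddAbove (f '' A₁) := ⟨1, by rintro y ⟨a, ha, rfl⟩; exact hfa a ha⟩
    have hbdd₂ : BddAbove (f '' A₂) := ⟨1, by rintro y ⟨b, hb, rfl⟩; exact hfb b hb⟩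
    have hle₁ : ∀ a ∈ A₁, f a ≤ s₁ := fun a ha => le_csSup hbdd₁ ⟨a, ha, rfl⟩
    have hle₂ : ∀ b ∈ A₂, f b ≤ s₂ := fun b hb => le_csSup hbdd₂ ⟨b, hb, rfl⟩
    have hs₁0 : 0 ≤ s₁ := by have := hle₁ 0 h0₁; simpa using this
    have hs₂0 : 0 ≤ s₂ := by have := hle₂ 0 h0₂; simpa using this
    have hsum : s₁ + s₂ ≤ 1 := by
      have h1 : s₁ ≤ 1 - s₂ := by
        apply csSup_le hne₁
        rintro y ⟨a, ha, rfl⟩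
        have h2 : s₂ ≤ 1 - f a := by
          apply csSup_le hne₂
          rintro z ⟨b, hb, rfl⟩
          linarith [hfab a ha b hb]
        linarith
      linarith
    rcases eq_or_lt_of_le hs₁0 with h1 | h1
    · -- s₁ = 0 : f ∈ pol A₂ ∩ recCone (pol A₁)
      right
      refine ⟨hfb, ?_⟩
      intro t ht g hg a ha
      have hfa0 : f a ≤ 0 := (hle₁ a ha).trans h1.ge
      have hga : g a ≤ 1 := hg a ha
      simp only [ContinuousLinearMap.add_apply, ContinuousLinearMap.smul_apply, smul_eq_mul]
      nlinarith
    · rcases eq_or_lt_of_le hs₂0 with h2 | h2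
      · -- s₂ = 0 : f ∈ pol A₁ ∩ recCone (pol A₂)
        left; right
        refine ⟨hfa, ?_⟩
        intro t ht g hg b hb
        have hfb0 : f b ≤ 0 := (hle₂ b hb).trans h2.ge
        have hgb : g b ≤ 1 := hg b hb
        simp only [ContinuousLinearMap.add_apply, ContinuousLinearMap.smul_apply, smul_eq_mul]
        nlinarith
      · -- both positive
        left; left
        have hden : (0:ℝ) < s₁ + s₂ := by linarith
        set t := s₁ / (s₁ + s₂) with htdef
        have ht0 : 0 < t := div_pos h1 hden
        have ht1 : t < 1 := by
          rw [div_lt_one hden]; linarith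
        have h1t : 1 - t = s₂ / (s₁ + s₂) := by
          rw [htdef]; field_simp; ring
        have hs₁t : s₁ ≤ t := by
          rw [htdef, le_div_iff₀ hden]; nlinarith
        have hs₂t : s₂ ≤ 1 - t := by
          rw [h1t, le_div_iff₀ hden]; nlinarith
        refine Set.mem_biUnion (Set.mem_Ioo.mpr ⟨ht0, ht1⟩) ?_
        constructor
        · rw [Set.mem_smul_set_iff_inv_smul_mem₀ (ne_of_gt ht0)]
          intro a ha
          have : f a ≤ t := (hle₁ a ha).trans hs₁t
          simp only [ContinuousLinearMap.smul_apply, smul_eq_mul]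
          rw [inv_mul_le_iff₀ ht0]
          simpa using this
        · rw [Set.mem_smul_set_iff_inv_smul_mem₀ (by linarith : (1:ℝ) - t ≠ 0)]
          intro b hb
          have : f b ≤ 1 - t := (hle₂ b hb).trans hs₂t
          simp only [ContinuousLinearMap.smul_apply, smul_eq_mul]
          rw [inv_mul_le_iff₀ (by linarith : (0:ℝ) < 1 - t)]
          simpa using this
  · intro hf x hx
    rcases Set.mem_add.mp hx with ⟨a, ha, b, hb, rfl⟩
    rcases hf with (hf | hf) | hf
    · rcases Set.mem_iUnion₂.mp hf with ⟨t, ht, hf1, hf2⟩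
      obtain ⟨ht0, ht1⟩ := Set.mem_Ioo.mp ht
      rcases hf1 with ⟨g, hg, rfl⟩
      have hfb2 : (t • g) b ≤ 1 - t := by
        rcases hf2 with ⟨h', hh', heq⟩
        have heq' : (1 - t) • h' = t • g := heq
        rw [← heq']
        simp only [ContinuousLinearMap.smul_apply, smul_eq_mul]
        nlinarith [hh' b hb]
      have hga : g a ≤ 1 := hg a ha
      simp only [map_add, ContinuousLinearMap.smul_apply, smul_eq_mul] at *
      nlinarith
    · have hfa : f a ≤ 1 := hf.1 a ha
      have hfb : f b ≤ 0 := recCone_pol_nonpos hf.2 b hb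
      simp only [map_add]; linarith
    · have hfb : f b ≤ 1 := hf.1 b hb
      have hfa : f a ≤ 0 := recCone_pol_nonpos hf.2 a ha
      simp only [map_add]; linarith
end

section
/- If A₁ is a convex cone and A₂ is a convex set, both containing 0, then the inverse sum A₁ # A₂ equals A₁ ∩ A₂. -/
open Set Metric
open scoped Pointwise

theorem stmt6 {X : Type*} [AddCommGroup X] [Module ℝ X]
    (A₁ A₂ : Set X)
    (hcone_smul : ∀ t : ℝ, 0 ≤ t → t • A₁ ⊆ A₁) (hcone_add : A₁ + A₁ ⊆ A₁)
    (h₂ : Convex ℝ A₂) (h0₁ : (0 : X) ∈ A₁) (h0₂ : (0 : X) ∈ A₂) :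
    invSum A₁ A₂ = A₁ ∩ A₂ := by
  apply Set.Subset.antisymm
  · rintro x (h | h)
    · rcases h with h | h
      · simp only [Set.mem_iUnion] at h
        obtain ⟨t, ht, hx1, hx2⟩ := h
        constructor
        · exact hcone_smul t ht.1.le hx1
        · obtain ⟨a, ha, rfl⟩ := hx2
          have := h₂ ha h0₂ (by linarith [ht.2] : (0:ℝ) ≤ 1 - t) ht.1.le (by ring)
          simpa using this
      · refine ⟨h.1, ?_⟩
        have := h.2 1 zero_le_one 0 h0₂
        simpa using this
    · refine ⟨?_, h.1⟩
      have := h.2 1 zero_le_one 0 h0₁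
      simpa using this
  · rintro x ⟨hx1, hx2⟩
    right
    refine ⟨hx2, ?_⟩
    intro t ht a ha
    exact hcone_add (Set.add_mem_add ha (hcone_smul t ht ⟨x, hx1, rfl⟩))
end

section
/- Let A₁, A₂ be convex subsets of a Banach space with 0 ∈ A₁ ∩ A₂. Then the inverse sum A₁ # A₂ is convex, and if A₁ and A₂ are closed then A₁ # A₂ is closed. -/
open Set Metric
open scoped Pointwise

section Aux

open Filter Topology

variable {X : Type*} [NormedAddCommGroup X] [NormedSpace ℝ X]

lemma zero_mem_recCone (A : Set X) : (0 : X) ∈ recCone A := by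
  intro t ht a ha; simpa using ha

lemma recCone_smul {A : Set X} {x : X} (hx : x ∈ recCone A) {c : ℝ} (hc : 0 ≤ c) :
    c • x ∈ recCone A := by
  intro t ht a ha
  rw [smul_smul]
  exact hx (t * c) (mul_nonneg ht hc) a ha

lemma recCone_add {A : Set X} {x y : X} (hx : x ∈ recCone A) (hy : y ∈ recCone A) :
    x + y ∈ recCone A := by
  intro t ht a ha
  rw [smul_add, ← add_assoc]
  exact hy t ht _ (hx t ht a ha)

/-- Auxiliary: `t • A` for `t ≠ 0`, `recCone A` for `t = 0`. -/
def gset (A : Set X) (t : ℝ) : Set X := if t = 0 then recCone A else t • A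

lemma gset_zero (A : Set X) : gset A 0 = recCone A := if_pos rfl

lemma gset_ne {A : Set X} {t : ℝ} (ht : t ≠ 0) : gset A t = t • A := if_neg ht

lemma gset_comb {A : Set X} (hA : Convex ℝ A) {x y : X} {s s' l m : ℝ}
    (hs : 0 ≤ s) (hs' : 0 ≤ s') (hl : 0 ≤ l) (hm : 0 ≤ m) (hlm : l + m = 1)
    (hx : x ∈ gset A s) (hy : y ∈ gset A s') :
    l • x + m • y ∈ gset A (l * s + m * s') := by
  rcases eq_or_lt_of_le (add_nonneg (mul_nonneg hl hs) (mul_nonneg hm hs')) with hu | hu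
  · -- l*s + m*s' = 0
    rw [← hu, gset_zero]
    have hls : l * s = 0 ∧ m * s' = 0 := by
      constructor <;> nlinarith [mul_nonneg hl hs, mul_nonneg hm hs']
    have hx' : l • x ∈ recCone A := by
      rcases eq_or_lt_of_le hl with h | h
      · rw [← h, zero_smul]; exact zero_mem_recCone A
      · have : s = 0 := by
          rcases mul_eq_zero.1 hls.1 with h' | h'
          · exact absurd h'.symm h.ne
          · exact h'
        rw [this, gset_zero] at hx
        exact recCone_smul hx hl
    have hy' : m • y ∈ recCone A := by
      rcases eq_or_lt_of_le hm with h | h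
      · rw [← h, zero_smul]; exact zero_mem_recCone A
      · have : s' = 0 := by
          rcases mul_eq_zero.1 hls.2 with h' | h'
          · exact absurd h'.symm h.ne
          · exact h'
        rw [this, gset_zero] at hy
        exact recCone_smul hy hm
    exact recCone_add hx' hy'
  · -- 0 < u
    set u := l * s + m * s' with hudef
    rw [gset_ne hu.ne', Set.mem_smul_set]
    rcases eq_or_lt_of_le hs with h0s | h0s
    · -- s = 0, hence m*s' = u > 0
      rw [← h0s, gset_zero] at hx
      have hs'pos : s' ≠ 0 := by
        intro h; rw [hudef, ← h0s, h] at hu; simp at hu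
      rw [gset_ne hs'pos, Set.mem_smul_set] at hy
      obtain ⟨b, hb, hbe⟩ := hy
      refine ⟨b + (l / u) • x, hx (l / u) (div_nonneg hl hu.le) b hb, ?_⟩
      have hmu : u = m * s' := by rw [hudef, ← h0s]; ring
      rw [smul_add, smul_smul, mul_div_cancel₀ _ hu.ne', hmu, ← hbe, smul_smul]
      abel
    · rcases eq_or_lt_of_le hs' with h0s' | h0s'
      · -- s' = 0
        rw [← h0s', gset_zero] at hy
        rw [gset_ne h0s.ne', Set.mem_smul_set] at hx
        obtain ⟨a, ha, hae⟩ := hx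
        refine ⟨a + (m / u) • y, hy (m / u) (div_nonneg hm hu.le) a ha, ?_⟩
        have hlu : u = l * s := by rw [hudef, ← h0s']; ring
        rw [smul_add, smul_smul, mul_div_cancel₀ _ hu.ne', hlu, ← hae, smul_smul]
      · -- both positive
        rw [gset_ne h0s.ne', Set.mem_smul_set] at hx
        rw [gset_ne h0s'.ne', Set.mem_smul_set] at hy
        obtain ⟨a, ha, hae⟩ := hx
        obtain ⟨b, hb, hbe⟩ := hy
        refine ⟨(l * s / u) • a + (m * s' / u) • b,
          hA ha hb (by positivity) (by positivity) (by field_simp; exact hudef.symm), ?_⟩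
        rw [smul_add, smul_smul, smul_smul, mul_div_cancel₀ _ hu.ne',
          mul_div_cancel₀ _ hu.ne', ← hae, ← hbe, smul_smul, smul_smul]

lemma mem_invSum_iff {A₁ A₂ : Set X} {x : X} :
    x ∈ invSum A₁ A₂ ↔ ∃ t : ℝ, 0 ≤ t ∧ t ≤ 1 ∧ x ∈ gset A₁ t ∧ x ∈ gset A₂ (1 - t) := by
  constructor
  · intro hx
    rcases hx with (hx | hx) | hx
    · simp only [Set.mem_iUnion, Set.mem_inter_iff, Set.mem_Ioo] at hx
      obtain ⟨t, ⟨ht0, ht1⟩, h1, h2⟩ := hx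
      exact ⟨t, ht0.le, ht1.le, by rwa [gset_ne ht0.ne'],
        by rwa [gset_ne (by linarith : (1:ℝ) - t ≠ 0)]⟩
    · refine ⟨1, zero_le_one, le_refl 1, ?_, ?_⟩
      · rw [gset_ne one_ne_zero, one_smul]; exact hx.1
      · simpa [gset_zero] using hx.2
    · refine ⟨0, le_refl 0, zero_le_one, ?_, ?_⟩
      · rw [gset_zero]; exact hx.2
      · rw [(by norm_num : (1:ℝ) - 0 = 1), gset_ne one_ne_zero, one_smul]; exact hx.1
  · rintro ⟨t, ht0, ht1, h1, h2⟩
    rcases eq_or_lt_of_le ht0 with h | h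
    · right
      rw [← h, gset_zero] at h1
      rw [← h, sub_zero, gset_ne one_ne_zero, one_smul] at h2
      exact ⟨h2, h1⟩
    · rcases eq_or_lt_of_le ht1 with h' | h'
      · left; right
        rw [h', gset_ne one_ne_zero, one_smul] at h1
        rw [h', sub_self, gset_zero] at h2
        exact ⟨h1, h2⟩
      · left; left
        simp only [Set.mem_iUnion, Set.mem_inter_iff, Set.mem_Ioo]
        exact ⟨t, ⟨h, h'⟩, by rwa [gset_ne h.ne'] at h1,
          by rwa [gset_ne (by linarith : (1:ℝ) - t ≠ 0)] at h2⟩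

lemma invSum_convex {A₁ A₂ : Set X} (h₁ : Convex ℝ A₁) (h₂ : Convex ℝ A₂) :
    Convex ℝ (invSum A₁ A₂) := by
  intro x hx y hy l m hl hm hlm
  rw [mem_invSum_iff] at hx hy ⊢
  obtain ⟨s, hs0, hs1, hx1, hx2⟩ := hx
  obtain ⟨s', hs'0, hs'1, hy1, hy2⟩ := hy
  refine ⟨l * s + m * s', by positivity,
    by nlinarith [mul_le_mul_of_nonneg_left hs1 hl, mul_le_mul_of_nonneg_left hs'1 hm],
    gset_comb h₁ hs0 hs'0 hl hm hlm hx1 hy1, ?_⟩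
  have key := gset_comb h₂ (by linarith : (0:ℝ) ≤ 1 - s) (by linarith : (0:ℝ) ≤ 1 - s')
    hl hm hlm hx2 hy2
  have : l * (1 - s) + m * (1 - s') = 1 - (l * s + m * s') := by linear_combination hlm
  rwa [this] at key

lemma recCone_isClosed {A : Set X} (hA : IsClosed A) : IsClosed (recCone A) := by
  have : recCone A = ⋂ t ∈ Set.Ici (0:ℝ), ⋂ a ∈ A, (fun x : X => a + t • x) ⁻¹' A := by
    ext x; simp [recCone]
  rw [this]
  refine isClosed_biInter fun t ht => isClosed_biInter fun a ha => ?_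
  exact hA.preimage (continuous_const.add (continuous_id.const_smul t))

lemma rec_of_limit {A : Set X} (hc : Convex ℝ A) (hcl : IsClosed A)
    {b : ℕ → X} {lam : ℕ → ℝ} {x : X} (hb : ∀ n, b n ∈ A) (hlam : ∀ n, 0 ≤ lam n)
    (hl0 : Tendsto lam atTop (𝓝 0))
    (hx : Tendsto (fun n => lam n • b n) atTop (𝓝 x)) :
    x ∈ recCone A := by
  intro s hs a ha
  have hmul : Tendsto (fun n => s * lam n) atTop (𝓝 0) := by
    simpa using hl0.const_mul s
  have hev : ∀ᶠ n in atTop, s * lam n ≤ 1 := hmul.eventually (eventually_le_nhds one_pos)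
  have ht : Tendsto (fun n => (1 - s * lam n) • a + (s * lam n) • b n) atTop
      (𝓝 (a + s • x)) := by
    have h1 : Tendsto (fun n => ((1 : ℝ) - s * lam n)) atTop (𝓝 1) := by
      simpa using tendsto_const_nhds.sub hmul
    have h2 : Tendsto (fun n => (s * lam n) • b n) atTop (𝓝 (s • x)) := by
      simp_rw [mul_smul]
      exact hx.const_smul s
    have := (h1.smul_const a).add h2
    simpa using this
  refine hcl.mem_of_tendsto ht (hev.mono fun n hn => ?_)
  exact hc ha (hb n) (by linarith) (mul_nonneg hs (hlam n)) (by ring)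

lemma limit_case {A₁ A₂ : Set X} (h₂ : Convex ℝ A₂) (hc₁ : IsClosed A₁) (hc₂ : IsClosed A₂)
    {u : ℕ → X} {t : ℕ → ℝ} {x : X} (ht0 : ∀ n, 0 < t n) (ht1 : ∀ n, t n < 1)
    (h1 : ∀ n, u n ∈ t n • A₁) (h2 : ∀ n, u n ∈ (1 - t n) • A₂)
    (hux : Tendsto u atTop (𝓝 x)) (hT : Tendsto t atTop (𝓝 1)) :
    x ∈ A₁ ∧ x ∈ recCone A₂ := by
  constructor
  · have ha : ∀ n, (t n)⁻¹ • u n ∈ A₁ := fun n =>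
      (mem_smul_set_iff_inv_smul_mem₀ (ht0 n).ne' _ _).1 (h1 n)
    have htd : Tendsto (fun n => (t n)⁻¹ • u n) atTop (𝓝 x) := by
      have := (hT.inv₀ one_ne_zero).smul hux
      simpa using this
    exact hc₁.mem_of_tendsto htd (Eventually.of_forall ha)
  · have hb : ∀ n, (1 - t n)⁻¹ • u n ∈ A₂ := fun n =>
      (mem_smul_set_iff_inv_smul_mem₀ (by linarith [ht1 n] : (1:ℝ) - t n ≠ 0) _ _).1 (h2 n)
    refine rec_of_limit (lam := fun n => 1 - t n) (b := fun n => (1 - t n)⁻¹ • u n)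
      h₂ hc₂ hb (fun n => show (0:ℝ) ≤ 1 - t n by linarith [ht1 n]) ?_ ?_
    · have h : Tendsto (fun n => 1 - t n) atTop (𝓝 (1 - 1)) := tendsto_const_nhds.sub hT
      simpa using h
    · have : (fun n => (1 - t n) • ((1 - t n)⁻¹ • u n)) = u := by
        funext n
        rw [smul_inv_smul₀ (by linarith [ht1 n] : (1:ℝ) - t n ≠ 0)]
      rwa [this]

lemma closureU_subset {A₁ A₂ : Set X} (h₁ : Convex ℝ A₁) (h₂ : Convex ℝ A₂)
    (hc₁ : IsClosed A₁) (hc₂ : IsClosed A₂) :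
    closure (⋃ t ∈ Set.Ioo (0:ℝ) 1, (t • A₁ ∩ (1 - t) • A₂)) ⊆ invSum A₁ A₂ := by
  intro x hx
  obtain ⟨u, hu, hux⟩ := mem_closure_iff_seq_limit.1 hx
  have key : ∀ n, ∃ t : ℝ, (0 < t ∧ t < 1) ∧ u n ∈ t • A₁ ∧ u n ∈ (1 - t) • A₂ := by
    intro n
    have := hu n
    simpa only [Set.mem_iUnion, Set.mem_inter_iff, Set.mem_Ioo, exists_prop] using this
  choose t ht h1 h2 using key
  obtain ⟨T, hT, φ, hφ, hTt⟩ := isCompact_Icc.tendsto_subseq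
    (fun n => (⟨(ht n).1.le, (ht n).2.le⟩ : t n ∈ Set.Icc (0:ℝ) 1))
  have huφ : Tendsto (u ∘ φ) atTop (𝓝 x) := hux.comp hφ.tendsto_atTop
  rcases eq_or_lt_of_le hT.1 with hT0 | hT0
  · -- T = 0 : swap roles
    have := limit_case h₁ hc₂ hc₁ (t := fun n => 1 - t (φ n))
      (fun n => show (0:ℝ) < 1 - t (φ n) by linarith [(ht (φ n)).2])
      (fun n => show (1:ℝ) - t (φ n) < 1 by linarith [(ht (φ n)).1])
      (fun n => h2 (φ n)) (fun n => by simpa [sub_sub_cancel] using h1 (φ n))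
      huφ (by simpa [← hT0] using tendsto_const_nhds.sub hTt)
    exact Or.inr ⟨this.1, this.2⟩
  · rcases eq_or_lt_of_le hT.2 with hT1 | hT1
    · -- T = 1
      have := limit_case h₂ hc₁ hc₂ (fun n => (ht (φ n)).1) (fun n => (ht (φ n)).2)
        (fun n => h1 (φ n)) (fun n => h2 (φ n)) huφ (by rwa [hT1] at hTt)
      exact Or.inl (Or.inr ⟨this.1, this.2⟩)
    · -- 0 < T < 1
      left; left
      simp only [Set.mem_iUnion, Set.mem_inter_iff, Set.mem_Ioo, exists_prop]
      refine ⟨T, ⟨hT0, hT1⟩, ?_, ?_⟩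
      · rw [mem_smul_set_iff_inv_smul_mem₀ hT0.ne']
        have htd : Tendsto (fun n => (t (φ n))⁻¹ • u (φ n)) atTop (𝓝 (T⁻¹ • x)) :=
          (hTt.inv₀ hT0.ne').smul huφ
        exact hc₁.mem_of_tendsto htd (Eventually.of_forall fun n =>
          (mem_smul_set_iff_inv_smul_mem₀ (ht (φ n)).1.ne' _ _).1 (h1 (φ n)))
      · rw [mem_smul_set_iff_inv_smul_mem₀ (by linarith : (1:ℝ) - T ≠ 0)]
        have hT't : Tendsto (fun n => 1 - t (φ n)) atTop (𝓝 (1 - T)) :=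
          tendsto_const_nhds.sub hTt
        have htd : Tendsto (fun n => (1 - t (φ n))⁻¹ • u (φ n)) atTop (𝓝 ((1 - T)⁻¹ • x)) :=
          (hT't.inv₀ (by linarith)).smul huφ
        exact hc₂.mem_of_tendsto htd (Eventually.of_forall fun n =>
          (mem_smul_set_iff_inv_smul_mem₀ (by linarith [(ht (φ n)).2] : (1:ℝ) - t (φ n) ≠ 0) _ _).1
            (h2 (φ n)))

lemma U_comm (A₁ A₂ : Set X) :
    (⋃ t ∈ Set.Ioo (0:ℝ) 1, (t • A₁ ∩ (1 - t) • A₂)) =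
      ⋃ t ∈ Set.Ioo (0:ℝ) 1, (t • A₂ ∩ (1 - t) • A₁) := by
  ext x
  simp only [Set.mem_iUnion, Set.mem_inter_iff, Set.mem_Ioo, exists_prop]
  constructor <;> rintro ⟨t, ⟨ht0, ht1⟩, ha, hb⟩ <;>
    exact ⟨1 - t, ⟨by linarith, by linarith⟩, hb, by rwa [sub_sub_cancel]⟩

lemma endpoint_mem_closure {A₁ A₂ : Set X} (h0₂ : (0:X) ∈ A₂) {x : X}
    (hx1 : x ∈ A₁) (hx2 : x ∈ recCone A₂) :
    x ∈ closure (⋃ t ∈ Set.Ioo (0:ℝ) 1, (t • A₁ ∩ (1 - t) • A₂)) := by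
  refine mem_closure_iff_seq_limit.2 ⟨fun n => (1 - ((n:ℝ) + 2)⁻¹) • x, fun n => ?_, ?_⟩
  · have h2 : (0:ℝ) < (n:ℝ) + 2 := by positivity
    have hinv1 : ((n:ℝ) + 2)⁻¹ ≤ 2⁻¹ := by
      apply inv_anti₀ (by norm_num)
      linarith [Nat.cast_nonneg (α := ℝ) n]
    have hinvpos : (0:ℝ) < ((n:ℝ) + 2)⁻¹ := by positivity
    show (1 - ((n:ℝ) + 2)⁻¹) • x ∈ _
    set s : ℝ := 1 - ((n:ℝ) + 2)⁻¹ with hsdef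
    have hs0 : 0 < s := by rw [hsdef]; linarith
    have hs1 : s < 1 := by rw [hsdef]; linarith
    have h1s : (0:ℝ) < 1 - s := by linarith
    simp only [Set.mem_iUnion, Set.mem_inter_iff, Set.mem_Ioo, exists_prop]
    refine ⟨s, ⟨hs0, hs1⟩, Set.smul_mem_smul_set hx1, ?_⟩
    rw [Set.mem_smul_set]
    refine ⟨((1 - s)⁻¹ * s) • x, ?_, ?_⟩
    · have := hx2 ((1 - s)⁻¹ * s) (mul_nonneg (inv_nonneg.2 h1s.le) hs0.le) 0 h0₂
      simpa using this
    · rw [smul_smul, ← mul_assoc, mul_inv_cancel₀ h1s.ne', one_mul]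
  · have hlim : Tendsto (fun n : ℕ => ((n:ℝ) + 2)⁻¹) atTop (𝓝 0) := by
      apply Tendsto.inv_tendsto_atTop
      exact tendsto_atTop_add_const_right atTop 2 tendsto_natCast_atTop_atTop
    have : Tendsto (fun n : ℕ => (1 - ((n:ℝ) + 2)⁻¹)) atTop (𝓝 1) := by
      simpa using tendsto_const_nhds.sub hlim
    have := this.smul_const x
    simpa using this

end Aux

theorem stmt7 {X : Type*} [NormedAddCommGroup X] [NormedSpace ℝ X] [CompleteSpace X]
    (A₁ A₂ : Set X) (h₁ : Convex ℝ A₁) (h₂ : Convex ℝ A₂)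
    (h0₁ : (0 : X) ∈ A₁) (h0₂ : (0 : X) ∈ A₂) :
    Convex ℝ (invSum A₁ A₂) ∧
      (IsClosed A₁ → IsClosed A₂ → IsClosed (invSum A₁ A₂)) := by
  refine ⟨invSum_convex h₁ h₂, fun hc₁ hc₂ => ?_⟩
  set U := ⋃ t ∈ Set.Ioo (0:ℝ) 1, (t • A₁ ∩ (1 - t) • A₂) with hU
  have hUsub : invSum A₁ A₂ ⊆ closure U := by
    intro x hx
    rcases hx with (hx | hx) | hx
    · exact subset_closure hx
    · exact endpoint_mem_closure h0₂ hx.1 hx.2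
    · rw [hU, U_comm A₁ A₂]
      exact endpoint_mem_closure h0₁ hx.1 hx.2
  have hclo : closure U ⊆ invSum A₁ A₂ := closureU_subset h₁ h₂ hc₁ hc₂
  have hsub : closure (invSum A₁ A₂) ⊆ invSum A₁ A₂ := by
    refine (closure_mono hUsub).trans ?_
    rw [closure_closure]
    exact hclo
  exact isClosed_of_closure_subset hsub
end

section
/- If a family {K_i : i ∈ I} of convex cones in a Banach space X has the normal property, then it has the closed intersection property (the closure of ⋂_i K_i equals ⋂_i closure(K_i)) and the weak normal property. -/
open Set Metric
open scoped Pointwise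

theorem stmt9 {X : Type*} [NormedAddCommGroup X] [NormedSpace ℝ X] [CompleteSpace X]
    {I : Type*} [Nonempty I] (K : I → Set X)
    (hcone_smul : ∀ i, ∀ t : ℝ, 0 ≤ t → t • K i ⊆ K i)
    (hcone_add : ∀ i, K i + K i ⊆ K i) (h0 : ∀ i, (0 : X) ∈ K i)
    (hnorm : ∃ η > (0:ℝ),
      (⋂ i, (K i + η • closedBall (0:X) 1)) ⊆ (⋂ i, K i) + closedBall (0:X) 1) :
    closure (⋂ i, K i) = (⋂ i, closure (K i)) ∧
      ∀ f : X →L[ℝ] ℝ, ∃ η > (0:ℝ),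
        (⋂ i, (K i + η • closedBall (0:X) 1)) ⊆
          closure ((⋂ i, K i) + {x : X | f x ≤ 1}) := by
  obtain ⟨η, hη, hN⟩ := hnorm
  have key : ∀ r : ℝ, 0 < r →
      (⋂ i, (K i + (r * η) • closedBall (0:X) 1)) ⊆
        (⋂ i, K i) + r • closedBall (0:X) 1 := by
    intro r hr x hx
    have hr' : r ≠ 0 := ne_of_gt hr
    have hy : r⁻¹ • x ∈ ⋂ i, (K i + η • closedBall (0:X) 1) := by
      rw [Set.mem_iInter]
      intro i
      obtain ⟨k, hk, b, hb, hkb⟩ := Set.mem_add.mp (Set.mem_iInter.mp hx i)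
      obtain ⟨c, hc, rfl⟩ := hb
      refine Set.mem_add.mpr ⟨r⁻¹ • k,
        hcone_smul i r⁻¹ (by positivity) ⟨k, hk, rfl⟩, η • c, ⟨c, hc, rfl⟩, ?_⟩
      rw [← hkb]
      simp only [smul_add, smul_smul]
      congr 2
      field_simp
    obtain ⟨k', hk', b', hb', hkb'⟩ := Set.mem_add.mp (hN hy)
    have hx' : x = r • k' + r • b' := by
      rw [← smul_add, hkb', smul_smul, mul_inv_cancel₀ hr', one_smul]
    refine Set.mem_add.mpr ⟨r • k', ?_, r • b', ⟨b', hb', rfl⟩, hx'.symm⟩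
    rw [Set.mem_iInter]
    intro i
    exact hcone_smul i r hr.le ⟨k', Set.mem_iInter.mp hk' i, rfl⟩
  constructor
  · apply Set.Subset.antisymm
    · exact Set.subset_iInter fun i =>
        closure_mono (Set.iInter_subset K i)
    · intro x hx
      rw [Metric.mem_closure_iff]
      intro ε hε
      have hr : (0:ℝ) < ε / 2 := by positivity
      have hx2 : x ∈ ⋂ i, (K i + (ε / 2 * η) • closedBall (0:X) 1) := by
        rw [Set.mem_iInter]
        intro i
        have hxi := Set.mem_iInter.mp hx i
        obtain ⟨k, hk, hdist⟩ := Metric.mem_closure_iff.mp hxi (ε / 2 * η) (by positivity)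
        refine Set.mem_add.mpr ⟨k, hk, x - k, ?_, by abel⟩
        refine ⟨(ε / 2 * η)⁻¹ • (x - k), ?_, ?_⟩
        · rw [mem_closedBall_zero_iff, norm_smul, norm_inv, Real.norm_eq_abs,
            abs_of_pos (by positivity)]
          rw [dist_eq_norm] at hdist
          rw [inv_mul_le_iff₀ (by positivity), mul_one]
          exact hdist.le
        · show (ε / 2 * η) • ((ε / 2 * η)⁻¹ • (x - k)) = x - k
          rw [smul_smul, mul_inv_cancel₀ (by positivity), one_smul]
      obtain ⟨k', hk', b', hb', hkb'⟩ := Set.mem_add.mp (key (ε/2) hr hx2)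
      refine ⟨k', hk', ?_⟩
      obtain ⟨c, hc, rfl⟩ := hb'
      rw [← hkb']
      show dist (k' + (ε / 2) • c) k' < ε
      rw [dist_eq_norm, add_sub_cancel_left, norm_smul, Real.norm_eq_abs, abs_of_pos hr]
      rw [mem_closedBall_zero_iff] at hc
      calc ε / 2 * ‖c‖ ≤ ε / 2 * 1 := by
            exact mul_le_mul_of_nonneg_left hc hr.le
        _ < ε := by linarith
  · intro f
    by_cases hf : f = 0
    · refine ⟨η, hη, fun x _ => subset_closure ?_⟩
      refine Set.mem_add.mpr ⟨0, Set.mem_iInter.mpr h0, x, ?_, by abel⟩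
      simp [hf]
    · have hfn : (0:ℝ) < ‖f‖ := norm_pos_iff.mpr hf
      refine ⟨‖f‖⁻¹ * η, by positivity, ?_⟩
      intro x hx
      obtain ⟨k', hk', b', hb', hkb'⟩ :=
        Set.mem_add.mp (key ‖f‖⁻¹ (by positivity) hx)
      refine subset_closure (Set.mem_add.mpr ⟨k', hk', b', ?_, hkb'⟩)
      obtain ⟨c, hc, rfl⟩ := hb'
      rw [mem_closedBall_zero_iff] at hc
      show f (‖f‖⁻¹ • c) ≤ 1
      rw [map_smul, smul_eq_mul]
      calc ‖f‖⁻¹ * f c ≤ ‖f‖⁻¹ * ‖f c‖ := by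
            exact mul_le_mul_of_nonneg_left (le_abs_self _) (by positivity)
        _ ≤ ‖f‖⁻¹ * (‖f‖ * ‖c‖) :=
            mul_le_mul_of_nonneg_left (f.le_opNorm c) (by positivity)
        _ ≤ ‖f‖⁻¹ * (‖f‖ * 1) := by
            apply mul_le_mul_of_nonneg_left _ (by positivity)
            exact mul_le_mul_of_nonneg_left hc hfn.le
        _ = 1 := by field_simp
end

section
/- A family {K_i : i ∈ I} of convex cones in a Banach space X has the normal property if and only if it has the closed intersection property and the family of closures {cl(K_i) : i ∈ I} has the normal property. -/
open Set Metric
open scoped Pointwise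

lemma mem_add_cball' {X : Type*} [NormedAddCommGroup X] {S : Set X} {x : X} {r : ℝ} :
    x ∈ S + closedBall (0:X) r ↔ ∃ s ∈ S, ‖x - s‖ ≤ r := by
  constructor
  · rintro ⟨s, hs, b, hb, rfl⟩
    exact ⟨s, hs, by simpa [add_sub_cancel_left] using mem_closedBall_zero_iff.1 hb⟩
  · rintro ⟨s, hs, h⟩
    exact ⟨s, hs, x - s, mem_closedBall_zero_iff.2 h, by module⟩

lemma scale_normal' {X : Type*} [NormedAddCommGroup X] [NormedSpace ℝ X] {I : Type*}
    (K : I → Set X) (hsm : ∀ i, ∀ t : ℝ, 0 ≤ t → t • K i ⊆ K i) {η : ℝ} (hη : 0 < η)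
    (hN : (⋂ i, (K i + closedBall (0:X) η)) ⊆ (⋂ i, K i) + closedBall (0:X) 1)
    {r : ℝ} (hr : 0 < r) :
    (⋂ i, (K i + closedBall (0:X) (r * η))) ⊆ (⋂ i, K i) + closedBall (0:X) r := by
  intro x hx
  have h1 : r⁻¹ • x ∈ ⋂ i, (K i + closedBall (0:X) η) := by
    refine mem_iInter.2 fun i => ?_
    obtain ⟨k, hk, hb⟩ := mem_add_cball'.1 (mem_iInter.1 hx i)
    refine mem_add_cball'.2 ⟨r⁻¹ • k, hsm i r⁻¹ (by positivity) ⟨k, hk, rfl⟩, ?_⟩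
    rw [← smul_sub, norm_smul, Real.norm_of_nonneg (by positivity)]
    calc r⁻¹ * ‖x - k‖ ≤ r⁻¹ * (r * η) := by gcongr
    _ = η := by field_simp
  obtain ⟨k, hk, hb⟩ := mem_add_cball'.1 (hN h1)
  refine mem_add_cball'.2 ⟨r • k, ?_, ?_⟩
  · exact mem_iInter.2 fun i => hsm i r hr.le ⟨k, mem_iInter.1 hk i, rfl⟩
  · have h2 : x - r • k = r • (r⁻¹ • x - k) := by
      rw [smul_sub, smul_smul, mul_inv_cancel₀ hr.ne', one_smul]
    rw [h2, norm_smul, Real.norm_of_nonneg hr.le]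
    calc r * ‖r⁻¹ • x - k‖ ≤ r * 1 := by gcongr
    _ = r := mul_one r


theorem stmt10 {X : Type*} [NormedAddCommGroup X] [NormedSpace ℝ X] [CompleteSpace X]
    {I : Type*} [Nonempty I] (K : I → Set X)
    (hcone_smul : ∀ i, ∀ t : ℝ, 0 ≤ t → t • K i ⊆ K i)
    (hcone_add : ∀ i, K i + K i ⊆ K i) (h0 : ∀ i, (0 : X) ∈ K i) :
    (∃ η > (0:ℝ),
        (⋂ i, (K i + η • closedBall (0:X) 1)) ⊆ (⋂ i, K i) + closedBall (0:X) 1) ↔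
      (closure (⋂ i, K i) = (⋂ i, closure (K i)) ∧
        ∃ η > (0:ℝ), (⋂ i, (closure (K i) + η • closedBall (0:X) 1)) ⊆
          (⋂ i, closure (K i)) + closedBall (0:X) 1) := by
  have hball : ∀ r : ℝ, 0 < r → r • closedBall (0:X) 1 = closedBall (0:X) r := by
    intro r hr
    rw [_root_.smul_closedBall _ _ zero_le_one, smul_zero, Real.norm_of_nonneg hr.le, mul_one]
  constructor
  · rintro ⟨η, hη, hN⟩
    rw [hball η hη] at hN
    have key : ∀ r : ℝ, 0 < r →
        (⋂ i, (K i + closedBall (0:X) (r * η))) ⊆ (⋂ i, K i) + closedBall (0:X) r :=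
      fun r hr => scale_normal' K hcone_smul hη hN hr
    have ha : closure (⋂ i, K i) = ⋂ i, closure (K i) := by
      apply Subset.antisymm
      · exact subset_iInter fun i => closure_mono (iInter_subset K i)
      · intro x hx
        rw [Metric.mem_closure_iff]
        intro ε hε
        have hx2 : x ∈ ⋂ i, (K i + closedBall (0:X) ((ε/2) * η)) := by
          refine mem_iInter.2 fun i => ?_
          obtain ⟨y, hy, hxy⟩ :=
            Metric.mem_closure_iff.1 (mem_iInter.1 hx i) (ε/2 * η) (by positivity)
          exact mem_add_cball'.2 ⟨y, hy, by rw [← dist_eq_norm]; exact hxy.le⟩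
        obtain ⟨s, hs, hxs⟩ := mem_add_cball'.1 (key (ε/2) (by positivity) hx2)
        exact ⟨s, hs, by rw [dist_eq_norm]; linarith⟩
    refine ⟨ha, η/2, by positivity, ?_⟩
    rw [hball (η/2) (by positivity)]
    intro x hx
    have hx2 : x ∈ ⋂ i, (K i + closedBall (0:X) η) := by
      refine mem_iInter.2 fun i => ?_
      obtain ⟨c, hc, hb⟩ := mem_add_cball'.1 (mem_iInter.1 hx i)
      obtain ⟨y, hy, hcy⟩ := Metric.mem_closure_iff.1 hc (η/2) (by positivity)
      refine mem_add_cball'.2 ⟨y, hy, ?_⟩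
      rw [dist_eq_norm] at hcy
      calc ‖x - y‖ ≤ ‖x - c‖ + ‖c - y‖ := norm_sub_le_norm_sub_add_norm_sub x c y
      _ ≤ η := by linarith
    obtain ⟨k, hk, hb⟩ := mem_add_cball'.1 (hN hx2)
    exact mem_add_cball'.2
      ⟨k, mem_iInter.2 fun i => subset_closure (mem_iInter.1 hk i), hb⟩
  · rintro ⟨hcl, η, hη, hN⟩
    rw [hball η hη] at hN
    refine ⟨η/2, by positivity, ?_⟩
    rw [hball (η/2) (by positivity)]
    intro x hx
    have hclsm : ∀ i, ∀ t : ℝ, 0 ≤ t → t • closure (K i) ⊆ closure (K i) := by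
      intro i t ht
      calc t • closure (K i) ⊆ closure (t • K i) := smul_closure_subset t (K i)
      _ ⊆ closure (K i) := closure_mono (hcone_smul i t ht)
    have hx2 : x ∈ ⋂ i, (closure (K i) + closedBall (0:X) ((1/2) * η)) := by
      refine mem_iInter.2 fun i => ?_
      obtain ⟨k, hk, hb⟩ := mem_add_cball'.1 (mem_iInter.1 hx i)
      exact mem_add_cball'.2 ⟨k, subset_closure hk, by linarith⟩
    have h3 := scale_normal' (fun i => closure (K i)) hclsm hη hN
      (by norm_num : (0:ℝ) < 1/2) hx2
    rw [← hcl] at h3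
    obtain ⟨k, hk, hb⟩ := mem_add_cball'.1 h3
    obtain ⟨y, hy, hky⟩ := Metric.mem_closure_iff.1 hk (1/2) (by norm_num)
    refine mem_add_cball'.2 ⟨y, hy, ?_⟩
    rw [dist_eq_norm] at hky
    calc ‖x - y‖ ≤ ‖x - k‖ + ‖k - y‖ := norm_sub_le_norm_sub_add_norm_sub x k y
    _ ≤ 1 := by linarith
end

section
/- Let {A_i : i ∈ I} be a family of convex subsets of a Banach space X with 0 ∈ ⋂_i A_i and satisfying the closed intersection property, and let η > 0. If ⋂_i (A_i + η·B_X) ⊆ (⋂_i A_i) + B_X, then for every η̂ ∈ (0, η): B_{X*} # cl^{w*}co(⋃_i A_i°) ⊆ cl^{w*}co(⋃_i (A_i° # (1/η̂)·B_{X*})). -/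
open Set Metric
open scoped Pointwise

section Aux

open NormedSpace

variable {X : Type*} [NormedAddCommGroup X] [NormedSpace ℝ X]

noncomputable instance : LocallyConvexSpace ℝ (WeakDual ℝ X) := WeakBilin.locallyConvexSpace

lemma memSmulClosedBall {Y : Type*} [NormedAddCommGroup Y] [NormedSpace ℝ Y]
    {r : ℝ} (hr : 0 < r) {x : Y} :
    x ∈ r • closedBall (0:Y) 1 ↔ ‖x‖ ≤ r := by
  constructor
  · rintro ⟨y, hy, rfl⟩
    rw [mem_closedBall_zero_iff] at hy
    calc ‖r • y‖ = r * ‖y‖ := by rw [norm_smul, Real.norm_of_nonneg hr.le]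
    _ ≤ r * 1 := by nlinarith
    _ = r := mul_one r
  · intro hx
    refine ⟨r⁻¹ • x, ?_, show r • (r⁻¹ • x) = x by
      rw [smul_smul, mul_inv_cancel₀ hr.ne', one_smul]⟩
    rw [mem_closedBall_zero_iff, norm_smul, Real.norm_of_nonneg (inv_nonneg.2 hr.le)]
    calc r⁻¹ * ‖x‖ ≤ r⁻¹ * r := by
          have : (0:ℝ) < r⁻¹ := inv_pos.2 hr
          nlinarith
    _ = 1 := inv_mul_cancel₀ hr.ne'

lemma wclMono {S T : Set (X →L[ℝ] ℝ)} (h : S ⊆ T) : wcl S ⊆ wcl T := by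
  intro f hf
  show StrongDual.toWeakDual (𝕜 := ℝ) (E := X) f ∈ closure _
  exact closure_mono (Set.image_mono h) hf

/-- Every continuous linear functional on the weak* dual is an evaluation. -/
lemma dual_of_weakDual (ψ : WeakDual ℝ X →L[ℝ] ℝ) :
    ∃ x : X, ∀ f : WeakDual ℝ X, ψ f = f x := by
  classical
  have h1 : ψ ⁻¹' (Set.Ioo (-1:ℝ) 1) ∈ nhds (0 : WeakDual ℝ X) := by
    apply ψ.continuous.continuousAt.preimage_mem_nhds
    rw [map_zero]
    exact Ioo_mem_nhds (by norm_num) (by norm_num)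
  obtain ⟨U, hU, hUs⟩ :=
    (LinearMap.hasBasis_weakBilin (topDualPairing ℝ X)).mem_iff.1 h1
  obtain ⟨t, r, hr, rfl⟩ := (SeminormFamily.basisSets_iff _).1 hU
  have hker : ∀ f : WeakDual ℝ X, (∀ x ∈ t, f x = 0) → ψ f = 0 := by
    intro f hf
    by_contra hne
    have hmem : ∀ c : ℝ, c • f ∈
        (t.sup ((topDualPairing ℝ X).toSeminormFamily)).ball 0 r := by
      intro c
      apply (Seminorm.mem_ball_zero _).2
      apply Seminorm.finset_sup_apply_lt hr
      intro x hx
      show ‖(c • f) x‖ < r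
      have : (c • f) x = c * f x := rfl
      rw [this, hf x hx, mul_zero, norm_zero]
      exact hr
    have habs : ∀ c : ℝ, c * ψ f ∈ Set.Ioo (-1:ℝ) 1 := by
      intro c
      have h' : ψ (c • f) ∈ Set.Ioo (-1:ℝ) 1 := hUs (hmem c)
      rwa [map_smul, smul_eq_mul] at h'
    have := (habs (2 * (ψ f)⁻¹)).2
    rw [mul_assoc, inv_mul_cancel₀ hne, mul_one] at this
    norm_num at this
  let L : t → (WeakDual ℝ X →ₗ[ℝ] ℝ) := fun x =>
    { toFun := fun f => f (x : X)
      map_add' := fun f g => rfl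
      map_smul' := fun c f => rfl }
  have hK : (⨅ i, LinearMap.ker (L i)) ≤ LinearMap.ker (ψ.toLinearMap) := by
    intro f hf
    rw [Submodule.mem_iInf] at hf
    rw [LinearMap.mem_ker]
    exact hker f (fun x hx => hf ⟨x, hx⟩)
  obtain ⟨c, hc⟩ := (Submodule.mem_span_range_iff_exists_fun ℝ).1 (mem_span_of_iInf_ker_le_ker hK)
  refine ⟨∑ i : t, c i • (i : X), fun f => ?_⟩
  have h2 := LinearMap.congr_fun hc f
  simp only [LinearMap.coe_sum, Finset.sum_apply, LinearMap.smul_apply,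
    ContinuousLinearMap.coe_coe] at h2
  rw [← h2, map_sum]
  congr 1
  ext i
  rw [map_smul]
  rfl

/-- Bipolar theorem for closed convex sets containing the origin. -/
lemma bipolar_mem {D : Set X} (hD : Convex ℝ D) (hcl : IsClosed D) (h0 : (0:X) ∈ D)
    {x : X} (hx : ∀ g ∈ pol D, g x ≤ 1) : x ∈ D := by
  by_contra hxD
  obtain ⟨φ, u, hu1, hu2⟩ := geometric_hahn_banach_closed_point hD hcl hxD
  have hu0 : 0 < u := by have := hu1 0 h0; rwa [map_zero] at this
  have hmem : u⁻¹ • φ ∈ pol D := by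
    intro d hd
    have h := (hu1 d hd).le
    have : (u⁻¹ • φ) d = u⁻¹ * φ d := rfl
    rw [this]
    calc u⁻¹ * φ d ≤ u⁻¹ * u := by
          have : (0:ℝ) < u⁻¹ := inv_pos.2 hu0
          nlinarith
    _ = 1 := inv_mul_cancel₀ hu0.ne'
  have h1 := hx _ hmem
  have h2 : (u⁻¹ • φ) x = u⁻¹ * φ x := rfl
  rw [h2] at h1
  have : (0:ℝ) < u⁻¹ := inv_pos.2 hu0
  nlinarith [mul_pos this (sub_pos.2 hu2), inv_mul_cancel₀ hu0.ne']

/-- The polar of an intersection of closed convex sets containing the origin is contained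
in the weak* closed convex hull of the union of polars. -/
lemma pol_iInter_subset {I : Type*} [Nonempty I] (D : I → Set X)
    (hconv : ∀ i, Convex ℝ (D i)) (hcl : ∀ i, IsClosed (D i)) (h0 : ∀ i, (0:X) ∈ D i) :
    pol (⋂ i, D i) ⊆ wcl (convexHull ℝ (⋃ i, pol (D i))) := by
  intro f hf
  set S := convexHull ℝ (⋃ i, pol (D i)) with hS
  show StrongDual.toWeakDual f ∈ closure (StrongDual.toWeakDual '' S)
  by_contra hfK
  have hKconv : Convex ℝ (closure (StrongDual.toWeakDual '' S)) :=
    ((convex_convexHull ℝ _).linear_image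
      (StrongDual.toWeakDual (𝕜 := ℝ) (E := X)).toLinearMap).closure
  obtain ⟨ψ, u, hu1, hu2⟩ := geometric_hahn_banach_closed_point hKconv isClosed_closure hfK
  have h0S : (0 : X →L[ℝ] ℝ) ∈ S := by
    apply subset_convexHull
    exact Set.mem_iUnion.2 ⟨Classical.arbitrary I, fun x _ => by norm_num⟩
  have h0K : (0 : WeakDual ℝ X) ∈ closure (StrongDual.toWeakDual '' S) :=
    subset_closure ⟨0, h0S, map_zero _⟩
  have hu0 : 0 < u := by have := hu1 0 h0K; rwa [map_zero] at this
  obtain ⟨x, hxev⟩ := dual_of_weakDual ψ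
  have hx₀D : ∀ i, u⁻¹ • x ∈ D i := by
    intro i
    apply bipolar_mem (hconv i) (hcl i) (h0 i)
    intro g hg
    have hgK : StrongDual.toWeakDual g ∈ closure (StrongDual.toWeakDual '' S) :=
      subset_closure ⟨g, subset_convexHull ℝ _ (Set.mem_iUnion.2 ⟨i, hg⟩), rfl⟩
    have hlt := hu1 _ hgK
    rw [hxev] at hlt
    have hgx : g x < u := hlt
    have : g (u⁻¹ • x) = u⁻¹ * g x := by rw [map_smul]; rfl
    rw [this]
    calc u⁻¹ * g x ≤ u⁻¹ * u := by
          have : (0:ℝ) < u⁻¹ := inv_pos.2 hu0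
          nlinarith
    _ = 1 := inv_mul_cancel₀ hu0.ne'
  have h1 : f (u⁻¹ • x) ≤ 1 := hf _ (Set.mem_iInter.2 hx₀D)
  have h2 : u < f x := by rw [hxev (StrongDual.toWeakDual f)] at hu2; exact hu2
  have h3 : f (u⁻¹ • x) = u⁻¹ * f x := by rw [map_smul]; rfl
  rw [h3] at h1
  have hpos : (0:ℝ) < u⁻¹ := inv_pos.2 hu0
  nlinarith [mul_pos hpos (sub_pos.2 h2), inv_mul_cancel₀ hu0.ne']

/-- Polar of a sum with a ball is contained in the inverse sum. -/
lemma pol_add_ball_subset {C : Set X} (h0 : (0:X) ∈ C) {e : ℝ} (he : 0 < e) :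
    pol (C + e • closedBall (0:X) 1) ⊆
      invSum (pol C) ((1 / e) • closedBall (0 : X →L[ℝ] ℝ) 1) := by
  intro f hf
  have key : ∀ a ∈ C, f a + e * ‖f‖ ≤ 1 := by
    intro a ha
    have hb : ∀ b : X, ‖b‖ ≤ 1 → f a + e * f b ≤ 1 := by
      intro b hbn
      have hmem : a + e • b ∈ C + e • closedBall (0:X) 1 :=
        Set.add_mem_add ha (Set.smul_mem_smul_set (mem_closedBall_zero_iff.2 hbn))
      have := hf _ hmem
      rwa [map_add, map_smul, smul_eq_mul] at this
    have hfa1 : f a ≤ 1 := by have := hb 0 (by simp); simpa using this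
    have hnorm : ‖f‖ ≤ (1 - f a) / e := by
      apply ContinuousLinearMap.opNorm_le_of_unit_norm (div_nonneg (by linarith) he.le)
      intro b hbn
      rw [Real.norm_eq_abs, abs_le]
      constructor
      · have := hb (-b) (by rw [norm_neg, hbn])
        rw [map_neg] at this
        have h' : -f b ≤ (1 - f a) / e :=
          (le_div_iff₀ he).2 (by nlinarith [mul_comm (-(f b)) e])
        linarith
      · have := hb b hbn.le
        rw [div_eq_inv_mul]
        have : f b ≤ e⁻¹ * (1 - f a) := by
          have hpos : (0:ℝ) < e⁻¹ := inv_pos.2 he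
          nlinarith [inv_mul_cancel₀ he.ne']
        linarith
    rw [div_eq_inv_mul] at hnorm
    nlinarith [inv_mul_cancel₀ he.ne']
  by_cases hf0 : f = 0
  · refine Or.inl (Or.inr ⟨?_, ?_⟩)
    · intro x _; rw [hf0]; norm_num
    · intro s hs g hg
      rw [hf0, smul_zero, add_zero]
      exact hg
  · have hfn : 0 < ‖f‖ := norm_pos_iff.2 hf0
    have hβ1 : e * ‖f‖ ≤ 1 := by have := key 0 h0; simpa using this
    have hβ0 : 0 < e * ‖f‖ := mul_pos he hfn
    rcases eq_or_lt_of_le hβ1 with hβeq | hβlt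
    · -- e * ‖f‖ = 1 : f ∈ B₂ ∩ recCone B₁
      refine Or.inr ⟨?_, ?_⟩
      · rw [memSmulClosedBall (by positivity)]
        rw [le_div_iff₀ he]
        linarith [mul_comm ‖f‖ e]
      · intro s hs g hg x hx
        have hfx : f x ≤ 0 := by have := key x hx; nlinarith
        have heval : (g + s • f) x = g x + s * f x := rfl
        rw [heval]
        nlinarith [hg x hx, mul_nonpos_of_nonneg_of_nonpos hs hfx]
    · -- 0 < e‖f‖ < 1
      refine Or.inl (Or.inl ?_)
      rw [Set.mem_iUnion₂]
      have htpos : (0:ℝ) < 1 - e * ‖f‖ := by linarith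
      refine ⟨1 - e * ‖f‖, ⟨by linarith, by linarith⟩, ?_, ?_⟩
      · rw [Set.mem_smul_set_iff_inv_smul_mem₀ htpos.ne']
        intro x hx
        have hkx := key x hx
        have : ((1 - e * ‖f‖)⁻¹ • f) x = (1 - e * ‖f‖)⁻¹ * f x := rfl
        rw [this]
        have hpos : (0:ℝ) < (1 - e * ‖f‖)⁻¹ := inv_pos.2 htpos
        have hinv := inv_mul_cancel₀ htpos.ne'
        nlinarith
      · have h1t : (1:ℝ) - (1 - e * ‖f‖) = e * ‖f‖ := by ring
        rw [h1t, smul_smul]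
        rw [memSmulClosedBall (mul_pos hβ0 (by positivity))]
        rw [mul_one_div, div_eq_mul_inv, mul_comm e ‖f‖, mul_assoc,
          mul_inv_cancel₀ he.ne', mul_one]

end Aux

theorem stmt12 {X : Type*} [NormedAddCommGroup X] [NormedSpace ℝ X] [CompleteSpace X]
    {I : Type*} [Nonempty I] (A : I → Set X) (hconv : ∀ i, Convex ℝ (A i))
    (h0 : (0 : X) ∈ ⋂ i, A i)
    (hcip : closure (⋂ i, A i) = ⋂ i, closure (A i))
    (η : ℝ) (hη : 0 < η)
    (h : (⋂ i, (A i + η • closedBall (0:X) 1)) ⊆ (⋂ i, A i) + closedBall (0:X) 1) :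
    ∀ ηhat : ℝ, 0 < ηhat → ηhat < η →
      invSum (closedBall (0 : X →L[ℝ] ℝ) 1) (wcl (convexHull ℝ (⋃ i, pol (A i)))) ⊆
        wcl (convexHull ℝ
          (⋃ i, invSum (pol (A i)) ((1 / ηhat) • closedBall (0 : X →L[ℝ] ℝ) 1))) := by
  intro e he heη
  intro f hf
  -- W is bounded by 1 on ⋂ A i
  have hWle : ∀ g ∈ wcl (convexHull ℝ (⋃ i, pol (A i))), ∀ a ∈ ⋂ i, A i, g a ≤ 1 := by
    intro g hg a ha
    have hTcl : IsClosed {h : WeakDual ℝ X | h a ≤ 1} :=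
      isClosed_le (WeakDual.eval_continuous a) continuous_const
    have hhull : convexHull ℝ (⋃ i, pol (A i)) ⊆ {g : X →L[ℝ] ℝ | g a ≤ 1} := by
      apply convexHull_min
      · rintro g' hg'
        obtain ⟨i, hi⟩ := Set.mem_iUnion.1 hg'
        exact hi a (Set.mem_iInter.1 ha i)
      · intro p hp q hq s t hs ht hst
        have : (s • p + t • q) a = s * p a + t * q a := rfl
        rw [Set.mem_setOf_eq, this]
        have hp' : p a ≤ 1 := hp
        have hq' : q a ≤ 1 := hq
        nlinarith [mul_le_mul_of_nonneg_left hp' hs, mul_le_mul_of_nonneg_left hq' ht]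
    have himg : StrongDual.toWeakDual (𝕜 := ℝ) (E := X) '' (convexHull ℝ (⋃ i, pol (A i)))
        ⊆ {h : WeakDual ℝ X | h a ≤ 1} := by
      rintro - ⟨g', hg', rfl⟩
      exact hhull hg'
    exact closure_minimal himg hTcl hg
  have h0W : (0 : X →L[ℝ] ℝ) ∈ wcl (convexHull ℝ (⋃ i, pol (A i))) := by
    show StrongDual.toWeakDual (𝕜 := ℝ) (E := X) (0 : X →L[ℝ] ℝ) ∈ closure _
    apply subset_closure
    refine ⟨0, ?_, rfl⟩
    apply subset_convexHull
    exact Set.mem_iUnion.2 ⟨Classical.arbitrary I, fun x _ => by norm_num⟩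
  -- Step 1 : f is bounded by 1 on ⋂ A i + B_X
  have step1 : ∀ a ∈ ⋂ i, A i, ∀ b ∈ closedBall (0:X) 1, f (a + b) ≤ 1 := by
    rcases hf with (hf1 | hf2) | hf3
    · rcases Set.mem_iUnion₂.1 hf1 with ⟨t, ⟨ht0, ht1⟩, hfB, hfW⟩
      have hfn : ‖f‖ ≤ t := (memSmulClosedBall ht0).1 hfB
      obtain ⟨g, hgW, rfl⟩ := hfW
      intro a ha b hb
      rw [mem_closedBall_zero_iff] at hb
      have hga : g a ≤ 1 := hWle g hgW a ha
      have hfa : ((1 - t) • g) a = (1 - t) * g a := rfl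
      have hfb : ((1 - t) • g) b ≤ t := by
        calc ((1 - t) • g) b ≤ ‖((1 - t) • g) b‖ := le_abs_self _
        _ ≤ ‖(1 - t) • g‖ * ‖b‖ := ContinuousLinearMap.le_opNorm _ b
        _ ≤ t * 1 := by
            apply mul_le_mul hfn hb (norm_nonneg b) ht0.le
        _ = t := mul_one t
      rw [map_add, hfa]
      nlinarith
    · obtain ⟨hfB, hfrec⟩ := hf2
      have hfn : ‖f‖ ≤ 1 := by rwa [mem_closedBall_zero_iff] at hfB
      have hneg : ∀ a ∈ ⋂ i, A i, f a ≤ 0 := by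
        intro a ha
        by_contra hpos
        push_neg at hpos
        have hmem : ∀ s : ℝ, 0 ≤ s → (s • f) a ≤ 1 := by
          intro s hs
          have := hfrec s hs 0 h0W
          rw [zero_add] at this
          exact hWle _ this a ha
        have := hmem (2 * (f a)⁻¹) (by positivity)
        have heval : ((2 * (f a)⁻¹) • f) a = 2 * (f a)⁻¹ * f a := rfl
        rw [heval, mul_assoc, inv_mul_cancel₀ hpos.ne', mul_one] at this
        norm_num at this
      intro a ha b hb
      rw [mem_closedBall_zero_iff] at hb
      have : f b ≤ 1 := by
        calc f b ≤ ‖f b‖ := le_abs_self _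
        _ ≤ ‖f‖ * ‖b‖ := ContinuousLinearMap.le_opNorm _ b
        _ ≤ 1 * 1 := mul_le_mul hfn hb (norm_nonneg b) (by norm_num)
        _ = 1 := mul_one 1
      rw [map_add]
      linarith [hneg a ha]
    · obtain ⟨hfW, hfrec⟩ := hf3
      have hkey : ∀ x : X, f x ≤ 0 := by
        intro x
        by_contra hpos
        push_neg at hpos
        have hmem : ∀ s : ℝ, 0 ≤ s → s * f x ≤ ‖x‖ := by
          intro s hs
          have h1 := hfrec s hs 0 (mem_closedBall_self (by norm_num))
          rw [zero_add, mem_closedBall_zero_iff] at h1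
          calc s * f x = (s • f) x := rfl
          _ ≤ ‖(s • f) x‖ := le_abs_self _
          _ ≤ ‖s • f‖ * ‖x‖ := ContinuousLinearMap.le_opNorm _ x
          _ ≤ 1 * ‖x‖ := mul_le_mul_of_nonneg_right h1 (norm_nonneg x)
          _ = ‖x‖ := one_mul _
        have hbig := hmem ((‖x‖ + 1) * (f x)⁻¹)
          (mul_nonneg (by positivity) (inv_nonneg.2 hpos.le))
        rw [mul_assoc, inv_mul_cancel₀ hpos.ne', mul_one] at hbig
        linarith
      have hf0 : f = 0 := by
        ext x
        simp only [ContinuousLinearMap.zero_apply]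
        have h1 := hkey x
        have h2 := hkey (-x)
        rw [map_neg] at h2
        linarith
      intro a _ b _
      rw [hf0]
      norm_num
  -- Step 2 : f ∈ pol (⋂ i, D i) where D i = closure (A i + e • B_X)
  set D : I → Set X := fun i => closure (A i + e • closedBall (0:X) 1) with hD
  have hDsub : ∀ i, D i ⊆ A i + η • closedBall (0:X) 1 := by
    intro i x hx
    obtain ⟨y, hy, hdist⟩ := Metric.mem_closure_iff.1 hx (η - e) (by linarith)
    obtain ⟨a, ha, c, hc, rfl⟩ := Set.mem_add.1 hy
    have hcn : ‖c‖ ≤ e := (memSmulClosedBall he).1 hc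
    refine Set.mem_add.2 ⟨a, ha, c + (x - (a + c)), ?_, by abel⟩
    rw [memSmulClosedBall hη]
    rw [dist_eq_norm] at hdist
    calc ‖c + (x - (a + c))‖ ≤ ‖c‖ + ‖x - (a + c)‖ := norm_add_le _ _
    _ ≤ e + (η - e) := by
        have : ‖x - (a + c)‖ ≤ η - e := hdist.le
        linarith
    _ = η := by ring
  have hpolD : f ∈ pol (⋂ i, D i) := by
    intro x hx
    have hx' : x ∈ ⋂ i, (A i + η • closedBall (0:X) 1) :=
      Set.mem_iInter.2 fun i => hDsub i (Set.mem_iInter.1 hx i)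
    obtain ⟨a, ha, b, hb, rfl⟩ := Set.mem_add.1 (h hx')
    exact step1 a ha b hb
  -- Step 3 : apply the separation lemma
  have hDconv : ∀ i, Convex ℝ (D i) :=
    fun i => ((hconv i).add ((convex_closedBall (0:X) 1).smul e)).closure
  have hDcl : ∀ i, IsClosed (D i) := fun i => isClosed_closure
  have hD0 : ∀ i, (0:X) ∈ D i := by
    intro i
    apply subset_closure
    exact Set.mem_add.2 ⟨0, Set.mem_iInter.1 h0 i, 0,
      ⟨0, mem_closedBall_self (by norm_num), smul_zero e⟩, add_zero 0⟩
  have hstep3 := pol_iInter_subset D hDconv hDcl hD0 hpolD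
  -- Step 4 : monotonicity
  have hmono : ∀ i, pol (D i) ⊆ invSum (pol (A i)) ((1 / e) • closedBall (0 : X →L[ℝ] ℝ) 1) := by
    intro i
    have h1 : pol (D i) ⊆ pol (A i + e • closedBall (0:X) 1) :=
      fun g hg x hx => hg x (subset_closure hx)
    exact h1.trans (pol_add_ball_subset (Set.mem_iInter.1 h0 i) he)
  exact wclMono (convexHull_mono (Set.iUnion_mono hmono)) hstep3
end

section
/- Let {A_i : i ∈ I} be a family of convex subsets of a Banach space X with 0 ∈ ⋂_i A_i and the closed intersection property. If for some η̂ > 0 one has B_{X*} # cl^{w*}co(⋃_i A_i°) ⊆ cl^{w*}co(⋃_i (A_i° # (1/η̂)·B_{X*})), then ⋂_i (A_i + η̂·B_X) ⊆ closure((⋂_i A_i) + B_X). -/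
open Set Metric
open scoped Pointwise

lemma weakDual_dual_eval {X : Type*} [NormedAddCommGroup X] [NormedSpace ℝ X]
    (Φ : WeakDual ℝ X →L[ℝ] ℝ) :
    ∃ x₀ : X, ∀ f : X →L[ℝ] ℝ, Φ (StrongDual.toWeakDual f) = f x₀ := by
  have : Nonempty X := ⟨0⟩
  set B := topDualPairing ℝ X with hB
  have hw : WithSeminorms (LinearMap.toSeminormFamily B : X → Seminorm ℝ (WeakBilin B)) :=
    B.weakBilin_withSeminorms
  set q : Seminorm ℝ (WeakBilin B) := (normSeminorm ℝ ℝ).comp (Φ.toLinearMap) with hq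
  have hqc : Continuous q := Φ.continuous.norm
  obtain ⟨s, C, hC0, hle⟩ := Seminorm.bound_of_continuous hw q hqc
  -- functionals vanishing on all y ∈ s are killed by Φ
  set L : s → (X →L[ℝ] ℝ) →ₗ[ℝ] ℝ := fun y => B.flip (y : X) with hL
  have hker : ⨅ y : s, LinearMap.ker (L y) ≤
      LinearMap.ker (Φ.toLinearMap : (X →L[ℝ] ℝ) →ₗ[ℝ] ℝ) := by
    intro f hf
    simp only [Submodule.mem_iInf, LinearMap.mem_ker] at hf ⊢
    have hzero : ∀ y ∈ s, (B.toSeminormFamily y) f = 0 := by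
      intro y hy
      have := hf ⟨y, hy⟩
      simp only [hL, LinearMap.flip_apply] at this
      simp [LinearMap.toSeminormFamily, this]
    have hsup : (s.sup B.toSeminormFamily) f ≤ 0 :=
      Seminorm.finset_sup_apply_le le_rfl (fun y hy => le_of_eq (hzero y hy))
    have hq0 : q f ≤ 0 := by
      have := hle f
      simp only [Seminorm.smul_apply] at this
      have h0 : (s.sup B.toSeminormFamily) f = 0 :=
        le_antisymm hsup (apply_nonneg _ f)
      calc q f ≤ C • (s.sup B.toSeminormFamily) f := hle f
        _ ≤ 0 := by rw [h0]; simp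
    have : ‖Φ f‖ ≤ 0 := hq0
    exact norm_le_zero_iff.1 this
  have hspan := mem_span_of_iInf_ker_le_ker (𝕜 := ℝ) hker
  replace hspan := (Submodule.mem_span_range_iff_exists_fun ℝ).1 hspan
  obtain ⟨c, hc⟩ := hspan
  refine ⟨∑ i : s, c i • (i : X), fun f => ?_⟩
  have := congrFun (congrArg (fun (g : (X →L[ℝ] ℝ) →ₗ[ℝ] ℝ) => (g : (X →L[ℝ] ℝ) → ℝ)) hc) f
  simp only [LinearMap.coe_sum, Finset.sum_apply, LinearMap.smul_apply, hL,
    LinearMap.flip_apply] at this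
  have hΦ : Φ (StrongDual.toWeakDual f) = ∑ i : s, c i • (B f (i : X)) := this.symm
  rw [hΦ]
  rw [map_sum]
  congr 1
  ext i
  simp [hB, topDualPairing_apply, map_smul]


instance weakDualLCS (X : Type*) [NormedAddCommGroup X] [NormedSpace ℝ X] :
    LocallyConvexSpace ℝ (WeakDual ℝ X) :=
  WeakBilin.locallyConvexSpace (B := topDualPairing ℝ X)

lemma zero_mem_pol {X : Type*} [NormedAddCommGroup X] [NormedSpace ℝ X] (A : Set X) :
    (0 : X →L[ℝ] ℝ) ∈ pol A := fun x _ => by simp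

lemma mem_closure_of_pol {X : Type*} [NormedAddCommGroup X] [NormedSpace ℝ X]
    {A : Set X} (hA : Convex ℝ A) (h0 : (0:X) ∈ A) {y : X}
    (hy : ∀ f ∈ pol A, f y ≤ 1) : y ∈ closure A := by
  by_contra hyn
  obtain ⟨f, u, hfu, hux⟩ :=
    geometric_hahn_banach_closed_point hA.closure isClosed_closure hyn
  have hu0 : 0 < u := by simpa using hfu 0 (subset_closure h0)
  have hg : u⁻¹ • f ∈ pol A := by
    intro a ha
    have hfa : f a < u := hfu a (subset_closure ha)
    have : u⁻¹ * f a ≤ u⁻¹ * u := by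
      apply mul_le_mul_of_nonneg_left hfa.le (inv_nonneg.2 hu0.le)
    simpa [inv_mul_cancel₀ hu0.ne'] using this
  have h1 := hy _ hg
  have h2 : u⁻¹ * f y > 1 := by
    rw [gt_iff_lt, show (1:ℝ) = u⁻¹ * u by rw [inv_mul_cancel₀ hu0.ne']]
    exact mul_lt_mul_of_pos_left hux (inv_pos.2 hu0)
  simp only [ContinuousLinearMap.smul_apply, smul_eq_mul] at h1
  linarith

lemma wcl_convexHull_le {X : Type*} [NormedAddCommGroup X] [NormedSpace ℝ X]
    {S : Set (X →L[ℝ] ℝ)} {x : X} (hS : ∀ g ∈ S, g x ≤ 1) :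
    ∀ f ∈ wcl (convexHull ℝ S), f x ≤ 1 := by
  intro f hf
  have hTconv : Convex ℝ {g : X →L[ℝ] ℝ | g x ≤ 1} :=
    convex_halfSpace_le (((topDualPairing ℝ X).flip x).isLinear) 1
  have hsub : convexHull ℝ S ⊆ {g : X →L[ℝ] ℝ | g x ≤ 1} := convexHull_min hS hTconv
  have hclosed : IsClosed {g : WeakDual ℝ X | g x ≤ 1} :=
    isClosed_le (WeakDual.eval_continuous x) continuous_const
  have himg : StrongDual.toWeakDual '' (convexHull ℝ S) ⊆
      {g : WeakDual ℝ X | g x ≤ 1} := by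
    rintro - ⟨p, hp, rfl⟩
    exact hsub hp
  have := closure_minimal himg hclosed hf
  exact this

lemma mem_wcl_pol {X : Type*} [NormedAddCommGroup X] [NormedSpace ℝ X] {I : Type*} [Nonempty I]
    (A : I → Set X) (hconv : ∀ i, Convex ℝ (A i)) (h0 : (0:X) ∈ ⋂ i, A i)
    (hcip : closure (⋂ i, A i) = ⋂ i, closure (A i))
    {g : X →L[ℝ] ℝ} (hg : ∀ c ∈ ⋂ i, A i, g c ≤ 1) :
    g ∈ wcl (convexHull ℝ (⋃ i, pol (A i))) := by
  by_contra hgn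
  set S := convexHull ℝ (⋃ i, pol (A i)) with hSdef
  have hK'c : Convex ℝ (closure (StrongDual.toWeakDual (𝕜 := ℝ) (E := X) '' S)) := by
    apply Convex.closure
    exact (convex_convexHull ℝ _).linear_image
      (StrongDual.toWeakDual (𝕜 := ℝ) (E := X)).toLinearMap
  obtain ⟨Φ, u, hΦ, hu⟩ := geometric_hahn_banach_closed_point hK'c isClosed_closure hgn
  obtain ⟨x₀, hx₀⟩ := weakDual_dual_eval Φ
  have hu0 : 0 < u := by
    obtain ⟨i₀⟩ := (inferInstance : Nonempty I)
    have h0S : (0 : X →L[ℝ] ℝ) ∈ S :=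
      subset_convexHull ℝ _ (mem_iUnion.2 ⟨i₀, zero_mem_pol _⟩)
    have := hΦ _ (subset_closure (mem_image_of_mem _ h0S))
    simpa using this
  set y : X := u⁻¹ • x₀ with hy
  have hyA : ∀ i, y ∈ closure (A i) := by
    intro i
    refine mem_closure_of_pol (hconv i) (by exact mem_iInter.1 h0 i) ?_
    intro p hp
    have hpS : p ∈ S := subset_convexHull ℝ _ (mem_iUnion.2 ⟨i, hp⟩)
    have h1 : Φ (StrongDual.toWeakDual p) < u :=
      hΦ _ (subset_closure (mem_image_of_mem _ hpS))
    rw [hx₀ p] at h1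
    have : u⁻¹ * p x₀ ≤ u⁻¹ * u :=
      mul_le_mul_of_nonneg_left h1.le (inv_nonneg.2 hu0.le)
    simpa [hy, map_smul, inv_mul_cancel₀ hu0.ne'] using this
  have hyC : y ∈ closure (⋂ i, A i) := by
    rw [hcip]; exact mem_iInter.2 hyA
  have hgy : g y ≤ 1 := by
    have hsub : (⋂ i, A i) ⊆ {z : X | g z ≤ 1} := hg
    have := closure_minimal hsub (isClosed_le g.continuous continuous_const) hyC
    exact this
  have hgx₀ : u < g x₀ := by rw [← hx₀ g]; exact hu
  have : 1 < g y := by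
    have : u⁻¹ * u < u⁻¹ * g x₀ := mul_lt_mul_of_pos_left hgx₀ (inv_pos.2 hu0)
    rw [inv_mul_cancel₀ hu0.ne'] at this
    simpa [hy, map_smul] using this
  linarith


theorem stmt13 {X : Type*} [NormedAddCommGroup X] [NormedSpace ℝ X] [CompleteSpace X]
    {I : Type*} [Nonempty I] (A : I → Set X) (hconv : ∀ i, Convex ℝ (A i))
    (h0 : (0 : X) ∈ ⋂ i, A i)
    (hcip : closure (⋂ i, A i) = ⋂ i, closure (A i))
    (ηhat : ℝ) (hηhat : 0 < ηhat)
    (h : invSum (closedBall (0 : X →L[ℝ] ℝ) 1) (wcl (convexHull ℝ (⋃ i, pol (A i)))) ⊆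
      wcl (convexHull ℝ
        (⋃ i, invSum (pol (A i)) ((1 / ηhat) • closedBall (0 : X →L[ℝ] ℝ) 1)))) :
    (⋂ i, (A i + ηhat • closedBall (0:X) 1)) ⊆
      closure ((⋂ i, A i) + closedBall (0:X) 1) := by
  intro x hx
  by_contra hxn
  have hCconv : Convex ℝ (⋂ i, A i) := convex_iInter fun i => hconv i
  have hDconv : Convex ℝ (closure ((⋂ i, A i) + closedBall (0:X) 1)) :=
    (hCconv.add (convex_closedBall _ _)).closure
  obtain ⟨f, u, hfu, hux⟩ := geometric_hahn_banach_closed_point hDconv isClosed_closure hxn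
  have h0D : (0:X) ∈ (⋂ i, A i) + closedBall (0:X) 1 := by
    have h01 : (0:X) ∈ closedBall (0:X) 1 := mem_closedBall_self zero_le_one
    have := Set.add_mem_add h0 h01
    simpa using this
  have hu0 : 0 < u := by simpa using hfu 0 (subset_closure h0D)
  obtain ⟨u', hu'1, hu'2⟩ := exists_between hux
  have hu'0 : 0 < u' := hu0.trans hu'1
  set φ : X →L[ℝ] ℝ := u'⁻¹ • f with hφdef
  set ρ : ℝ := u / u' with hρdef
  have hρ1 : ρ < 1 := (div_lt_one hu'0).2 hu'1
  have hρ0 : 0 < ρ := div_pos hu0 hu'0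
  have hmem : ∀ c ∈ ⋂ i, A i, ∀ b ∈ closedBall (0:X) 1, φ c + φ b ≤ ρ := by
    intro c hc b hb
    have h1 : f (c + b) < u := hfu _ (subset_closure (Set.add_mem_add hc hb))
    have h2 : u'⁻¹ * f (c + b) ≤ u'⁻¹ * u :=
      mul_le_mul_of_nonneg_left h1.le (inv_nonneg.2 hu'0.le)
    have h3 : φ (c + b) ≤ ρ := by
      rw [hρdef, div_eq_inv_mul]
      simpa [hφdef] using h2
    simpa [map_add] using h3
  have hnorm : ∀ c ∈ ⋂ i, A i, ‖φ‖ ≤ ρ - φ c := by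
    intro c hc
    have h00 : φ c ≤ ρ := by
      have := hmem c hc 0 (mem_closedBall_self zero_le_one)
      simpa using this
    refine ContinuousLinearMap.opNorm_le_bound φ (by linarith) (fun z => ?_)
    rcases eq_or_ne z 0 with rfl | hz
    · simp
    · have hzn : (0:ℝ) < ‖z‖ := norm_pos_iff.2 hz
      have hzb : ‖z‖⁻¹ • z ∈ closedBall (0:X) 1 := by
        rw [mem_closedBall_zero_iff, norm_smul, norm_inv, norm_norm,
          inv_mul_cancel₀ hzn.ne']
      have hzb' : -(‖z‖⁻¹ • z) ∈ closedBall (0:X) 1 := by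
        rwa [mem_closedBall_zero_iff, norm_neg, ← mem_closedBall_zero_iff]
      have hb1 := hmem c hc _ hzb
      have hb2 := hmem c hc _ hzb'
      rw [map_neg] at hb2
      have habs : |φ (‖z‖⁻¹ • z)| ≤ ρ - φ c := abs_le.2 ⟨by linarith, by linarith⟩
      have heq : ‖φ z‖ = ‖z‖ * |φ (‖z‖⁻¹ • z)| := by
        rw [map_smul, smul_eq_mul, abs_mul, abs_inv, abs_norm,
          ← mul_assoc, mul_inv_cancel₀ hzn.ne', one_mul, Real.norm_eq_abs]
      rw [heq, mul_comm]
      exact mul_le_mul_of_nonneg_right habs hzn.le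
  have hφx : 1 < φ x := by
    have h1 : u'⁻¹ * u' < u'⁻¹ * f x := mul_lt_mul_of_pos_left hu'2 (inv_pos.2 hu'0)
    rw [inv_mul_cancel₀ hu'0.ne'] at h1
    simpa [hφdef] using h1
  have hφn1 : ‖φ‖ < 1 := by
    have := hnorm 0 h0
    simp only [map_zero, sub_zero] at this
    linarith
  have hkey : φ ∈ invSum (closedBall (0 : X →L[ℝ] ℝ) 1)
      (wcl (convexHull ℝ (⋃ i, pol (A i)))) := by
    simp only [invSum, Set.mem_union]
    rcases eq_or_ne φ 0 with hφ0 | hφ0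
    · refine Or.inl (Or.inr ⟨?_, ?_⟩)
      · rw [hφ0]; exact mem_closedBall_self zero_le_one
      · intro t ht a ha; simpa [hφ0] using ha
    · have ht0 : 0 < ‖φ‖ := norm_pos_iff.2 hφ0
      refine Or.inl (Or.inl (mem_iUnion₂.2 ⟨‖φ‖, ⟨ht0, hφn1⟩, ?_, ?_⟩))
      · exact Set.mem_smul_set.2 ⟨‖φ‖⁻¹ • φ,
          by rw [mem_closedBall_zero_iff, norm_smul _ φ, norm_inv, norm_norm,
            inv_mul_cancel₀ ht0.ne'],
          by rw [smul_smul, mul_inv_cancel₀ ht0.ne', one_smul]⟩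
      · have h1t : (0:ℝ) < 1 - ‖φ‖ := by linarith
        refine Set.mem_smul_set.2 ⟨(1 - ‖φ‖)⁻¹ • φ, ?_,
          by rw [smul_smul, mul_inv_cancel₀ h1t.ne', one_smul]⟩
        apply mem_wcl_pol A hconv h0 hcip
        intro c hc
        have h1 := hnorm c hc
        have hφc : φ c ≤ 1 - ‖φ‖ := by linarith
        rw [ContinuousLinearMap.smul_apply, smul_eq_mul]
        calc (1 - ‖φ‖)⁻¹ * φ c ≤ (1 - ‖φ‖)⁻¹ * (1 - ‖φ‖) :=
              mul_le_mul_of_nonneg_left hφc (inv_nonneg.2 h1t.le)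
          _ = 1 := inv_mul_cancel₀ h1t.ne'
  have hG := h hkey
  have hfinal : φ x ≤ 1 := by
    refine wcl_convexHull_le ?_ φ hG
    intro g hg
    obtain ⟨i, hgi⟩ := mem_iUnion.1 hg
    have hxi := mem_iInter.1 hx i
    rw [Set.mem_add] at hxi
    obtain ⟨a, ha, b, hb, hab⟩ := hxi
    have hbn : ‖b‖ ≤ ηhat := by
      obtain ⟨b', hb', hb'eq⟩ := Set.mem_smul_set.1 hb
      rw [mem_closedBall_zero_iff] at hb'
      rw [← hb'eq, norm_smul, Real.norm_of_nonneg hηhat.le]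
      calc ηhat * ‖b'‖ ≤ ηhat * 1 := mul_le_mul_of_nonneg_left hb' hηhat.le
        _ = ηhat := mul_one _
    have hgx : g x = g a + g b := by rw [← hab, map_add]
    simp only [invSum, Set.mem_union] at hgi
    rcases hgi with (hgi | hgi) | hgi
    · obtain ⟨t, htIoo, hgp, hgq⟩ := mem_iUnion₂.1 hgi
      obtain ⟨ht0, ht1⟩ := htIoo
      obtain ⟨p, hp, hpt⟩ := Set.mem_smul_set.1 hgp
      obtain ⟨q, hq, hqt⟩ := Set.mem_smul_set.1 hgq
      have hqn : ‖q‖ ≤ 1/ηhat := by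
        obtain ⟨q', hq', hq'eq⟩ := Set.mem_smul_set.1 hq
        rw [mem_closedBall_zero_iff] at hq'
        rw [← hq'eq, norm_smul _ q', Real.norm_of_nonneg (by positivity : (0:ℝ) ≤ 1/ηhat)]
        calc (1/ηhat) * ‖q'‖ ≤ (1/ηhat) * 1 :=
              mul_le_mul_of_nonneg_left hq' (by positivity)
          _ = 1/ηhat := mul_one _
      have hga : g a ≤ t := by
        rw [← hpt, ContinuousLinearMap.smul_apply, smul_eq_mul]
        calc t * p a ≤ t * 1 := mul_le_mul_of_nonneg_left (hp a ha) ht0.le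
          _ = t := mul_one _
      have hgb : g b ≤ 1 - t := by
        have h1 : g b ≤ ‖g‖ * ‖b‖ := by
          calc g b ≤ |g b| := le_abs_self _
            _ = ‖g b‖ := (Real.norm_eq_abs _).symm
            _ ≤ ‖g‖ * ‖b‖ := g.le_opNorm b
        have h2 : ‖g‖ ≤ (1 - t) * (1/ηhat) := by
          rw [← hqt, norm_smul _ q, Real.norm_of_nonneg (by linarith : (0:ℝ) ≤ 1-t)]
          exact mul_le_mul_of_nonneg_left hqn (by linarith)
        calc g b ≤ ‖g‖ * ‖b‖ := h1
          _ ≤ ((1-t) * (1/ηhat)) * ηhat :=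
              mul_le_mul h2 hbn (norm_nonneg b)
                (mul_nonneg (by linarith) (by positivity))
          _ = 1 - t := by field_simp
      rw [hgx]; linarith
    · obtain ⟨hgp, hgr⟩ := hgi
      have hg0 : g = 0 := by
        by_contra hne
        have hgn : 0 < ‖g‖ := norm_pos_iff.2 hne
        set τ : ℝ := (1/ηhat + 1) / ‖g‖ with hτdef
        have hτ : 0 ≤ τ := by positivity
        have h0m : (0 : X →L[ℝ] ℝ) ∈ (1/ηhat) • closedBall (0 : X →L[ℝ] ℝ) 1 :=
          Set.mem_smul_set.2 ⟨0, mem_closedBall_self zero_le_one, smul_zero _⟩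
        have hmem2 := hgr τ hτ 0 h0m
        rw [zero_add] at hmem2
        obtain ⟨w, hw, hweq⟩ := Set.mem_smul_set.1 hmem2
        rw [mem_closedBall_zero_iff] at hw
        have hn1 : ‖τ • g‖ ≤ 1/ηhat := by
          rw [← hweq, norm_smul _ w, Real.norm_of_nonneg (by positivity : (0:ℝ) ≤ 1/ηhat)]
          calc (1/ηhat) * ‖w‖ ≤ (1/ηhat) * 1 :=
                mul_le_mul_of_nonneg_left hw (by positivity)
            _ = 1/ηhat := mul_one _
        rw [norm_smul τ g, Real.norm_of_nonneg hτ] at hn1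
        have hn2 : τ * ‖g‖ = 1/ηhat + 1 := div_mul_cancel₀ _ hgn.ne'
        linarith
      rw [hgx, hg0]; simp
    · obtain ⟨hgb, hgr⟩ := hgi
      have hga : g a ≤ 0 := by
        by_contra hpos
        push_neg at hpos
        have hτ := hgr (2 / g a) (le_of_lt (div_pos two_pos hpos)) 0 (zero_mem_pol _)
        rw [zero_add] at hτ
        have h2le := hτ a ha
        rw [ContinuousLinearMap.smul_apply, smul_eq_mul,
          div_mul_cancel₀ _ hpos.ne'] at h2le
        linarith
      have hgn : ‖g‖ ≤ 1/ηhat := by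
        obtain ⟨w, hw, hweq⟩ := Set.mem_smul_set.1 hgb
        rw [mem_closedBall_zero_iff] at hw
        rw [← hweq, norm_smul _ w, Real.norm_of_nonneg (by positivity : (0:ℝ) ≤ 1/ηhat)]
        calc (1/ηhat) * ‖w‖ ≤ (1/ηhat) * 1 :=
              mul_le_mul_of_nonneg_left hw (by positivity)
          _ = 1/ηhat := mul_one _
      have hgb2 : g b ≤ 1 := by
        calc g b ≤ |g b| := le_abs_self _
          _ = ‖g b‖ := (Real.norm_eq_abs _).symm
          _ ≤ ‖g‖ * ‖b‖ := g.le_opNorm b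
          _ ≤ (1/ηhat) * ηhat := mul_le_mul hgn hbn (norm_nonneg b) (by positivity)
          _ = 1 := by field_simp
      rw [hgx]; linarith
  linarith
end

section
/- A family {K_i : i ∈ I} of convex cones in a Banach space X has the normal property if and only if it has the closed intersection property and there exists η > 0 such that {K_i° : i ∈ I} has the extended Jameson property (G_η) in X*. -/
open Set Metric
open scoped Pointwise

open NormedSpace Topology

section Helpers

variable {X : Type*} [NormedAddCommGroup X] [NormedSpace ℝ X]

lemma mem_wcl_iff {S : Set (X →L[ℝ] ℝ)} {f : X →L[ℝ] ℝ} :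
    f ∈ wcl S ↔ ∀ (J : Finset X) (ε : ℝ), 0 < ε → ∃ g ∈ S, ∀ x ∈ J, |g x - f x| < ε := by
  classical
  have hemb : IsEmbedding (fun (g : WeakDual ℝ X) (y : X) => g y) :=
    WeakBilin.isEmbedding (B := topDualPairing ℝ X) ContinuousLinearMap.coe_injective
  rw [wcl, Set.mem_setOf_eq, hemb.closure_eq_preimage_closure_image, Set.mem_preimage]
  constructor
  · intro hf J ε hε
    have hU : (↑J : Set X).pi (fun x => Metric.ball (f x) ε) ∈
        𝓝 (fun y => (StrongDual.toWeakDual (𝕜 := ℝ) f) y) :=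
      set_pi_mem_nhds J.finite_toSet (fun x _ => Metric.ball_mem_nhds _ hε)
    obtain ⟨v, hv1, hv2⟩ := mem_closure_iff_nhds.mp hf _ hU
    obtain ⟨g', hg', rfl⟩ := hv2
    obtain ⟨g, hg, rfl⟩ := hg'
    refine ⟨g, hg, fun x hx => ?_⟩
    have := hv1 x hx
    simpa [Real.dist_eq] using this
  · intro h
    rw [mem_closure_iff_nhds]
    intro U hU
    rw [nhds_pi, Filter.mem_pi] at hU
    obtain ⟨I0, hI0fin, t, ht, hsub⟩ := hU
    choose δ hδpos hδsub using fun x => Metric.mem_nhds_iff.mp (ht x)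
    set J : Finset X := hI0fin.toFinset with hJ
    by_cases hJne : J.Nonempty
    · obtain ⟨g, hg, hgx⟩ := h J (J.inf' hJne δ) (by
        rw [Finset.lt_inf'_iff]; exact fun i _ => hδpos i)
      refine ⟨fun y => g y, hsub ?_, Set.mem_image_of_mem _ (Set.mem_image_of_mem _ hg)⟩
      intro x hx
      have hxJ : x ∈ J := by simpa [hJ] using hx
      apply hδsub x
      have := hgx x hxJ
      have hle : J.inf' hJne δ ≤ δ x := Finset.inf'_le _ hxJ
      simp only [Metric.mem_ball, Real.dist_eq]
      have hfx : (StrongDual.toWeakDual (𝕜:=ℝ) f) x = f x := rfl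
      rw [hfx]
      exact lt_of_lt_of_le this hle
    · obtain ⟨g, hg, _⟩ := h J 1 one_pos
      refine ⟨fun y => g y, hsub ?_, Set.mem_image_of_mem _ (Set.mem_image_of_mem _ hg)⟩
      intro x hx
      exact absurd ⟨x, by simpa [hJ] using hx⟩ hJne

lemma eval_le_of_mem_wcl {S : Set (X →L[ℝ] ℝ)} {f : X →L[ℝ] ℝ} (hf : f ∈ wcl S)
    {x : X} {c : ℝ} (h : ∀ g ∈ S, g x ≤ c) : f x ≤ c := by
  by_contra hlt
  push_neg at hlt
  obtain ⟨g, hg, hgx⟩ := mem_wcl_iff.mp hf {x} (f x - c) (by linarith)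
  have h1 := hgx x (Finset.mem_singleton_self x)
  have h2 := h g hg
  rw [abs_lt] at h1
  linarith [h1.1]

lemma exists_sep {S : Set (X →L[ℝ] ℝ)} (hconv : Convex ℝ S) {f : X →L[ℝ] ℝ}
    (hf : f ∉ wcl S) :
    ∃ (x₀ : X) (u : ℝ), (∀ g ∈ S, g x₀ < u) ∧ u < f x₀ := by
  classical
  rw [mem_wcl_iff] at hf
  push_neg at hf
  obtain ⟨J, ε, hε, hsep⟩ := hf
  let Φ : (X →L[ℝ] ℝ) →ₗ[ℝ] (↥J → ℝ) :=
    { toFun := fun g x => g x.1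
      map_add' := by intro a b; ext x; simp
      map_smul' := by intro c a; ext x; simp }
  have hQconv : Convex ℝ (closure (Φ '' S)) := (hconv.linear_image Φ).closure
  have hp : Φ f ∉ closure (Φ '' S) := by
    intro hmem
    obtain ⟨q, hq, hdq⟩ := Metric.mem_closure_iff.mp hmem ε hε
    obtain ⟨g, hg, rfl⟩ := hq
    obtain ⟨x, hxJ, hxge⟩ := hsep g hg
    have h1 : dist (Φ f ⟨x, hxJ⟩) (Φ g ⟨x, hxJ⟩) ≤ dist (Φ f) (Φ g) :=
      dist_le_pi_dist _ _ _
    have h2 : |g x - f x| < ε := by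
      have := lt_of_le_of_lt h1 hdq
      simpa [Φ, Real.dist_eq, abs_sub_comm] using this
    linarith
  obtain ⟨φ, u, hu1, hu2⟩ := geometric_hahn_banach_closed_point hQconv isClosed_closure hp
  have key : ∀ h : X →L[ℝ] ℝ,
      h (∑ x : ↥J, φ (Pi.single x 1) • (x : X)) = φ (Φ h) := by
    intro h
    rw [map_sum]
    have h1 : (Φ h : ↥J → ℝ) = ∑ x : ↥J, Pi.single x (h x.1) := by
      rw [Finset.univ_sum_single]; rfl
    rw [h1, map_sum]
    refine Finset.sum_congr rfl fun x _ => ?_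
    have h2 : (Pi.single x (h (x:X)) : ↥J → ℝ) = h (x:X) • (Pi.single x (1:ℝ) : ↥J → ℝ) := by
      rw [← Pi.single_smul]; simp
    rw [h2, map_smul]
    simp [mul_comm]
  refine ⟨∑ x : ↥J, φ (Pi.single x 1) • (x : X), u, ?_, ?_⟩
  · intro g hg
    rw [key g]
    exact hu1 _ (subset_closure (Set.mem_image_of_mem _ hg))
  · rw [key f]
    exact hu2

lemma mem_closure_of_forall_pol {A : Set X} (hA : Convex ℝ A) (h0 : (0:X) ∈ A) {x : X}
    (hx : ∀ g : X →L[ℝ] ℝ, (∀ a ∈ A, g a ≤ 1) → g x ≤ 1) : x ∈ closure A := by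
  by_contra hc
  obtain ⟨ψ, u, hu1, hu2⟩ :=
    geometric_hahn_banach_closed_point hA.closure isClosed_closure hc
  have hu0 : 0 < u := by
    have := hu1 0 (subset_closure h0)
    simpa using this
  have hg : ∀ a ∈ A, (u⁻¹ • ψ) a ≤ 1 := by
    intro a ha
    have h1 := hu1 a (subset_closure ha)
    have h2 : u⁻¹ * ψ a ≤ u⁻¹ * u :=
      mul_le_mul_of_nonneg_left (le_of_lt h1) (by positivity)
    simpa [inv_mul_cancel₀ (ne_of_gt hu0)] using h2
  have h3 : u⁻¹ * ψ x ≤ 1 := by simpa using hx _ hg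
  have h4 : ψ x ≤ u := by
    have h5 := mul_le_mul_of_nonneg_left h3 (le_of_lt hu0)
    rw [← mul_assoc, mul_inv_cancel₀ (ne_of_gt hu0)] at h5
    linarith
  linarith

lemma mem_closure_cone_of_dual {A : Set X} (hA : Convex ℝ A) (h0 : (0:X) ∈ A)
    (hcone : ∀ (t : ℝ), 0 ≤ t → t • A ⊆ A) {x : X}
    (hx : ∀ g : X →L[ℝ] ℝ, (∀ a ∈ A, g a ≤ 0) → g x ≤ 0) : x ∈ closure A := by
  by_contra hc
  obtain ⟨ψ, u, hu1, hu2⟩ :=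
    geometric_hahn_banach_closed_point hA.closure isClosed_closure hc
  have hu0 : 0 < u := by
    have := hu1 0 (subset_closure h0)
    simpa using this
  have hψA : ∀ a ∈ A, ψ a ≤ 0 := by
    intro a ha
    by_contra hpos
    push_neg at hpos
    have hmem : ((u + 1) / ψ a) • a ∈ A :=
      hcone _ (le_of_lt (div_pos (by linarith) hpos)) (Set.smul_mem_smul_set ha)
    have h1 := hu1 _ (subset_closure hmem)
    rw [map_smul] at h1
    have heq : (u + 1) / ψ a * ψ a = u + 1 := div_mul_cancel₀ _ (ne_of_gt hpos)
    simp only [smul_eq_mul] at h1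
    rw [heq] at h1
    linarith
  linarith [hx ψ hψA]

lemma closure_subset_add {S : Set X} {δ : ℝ} (hδ : 0 < δ) :
    closure S ⊆ S + closedBall (0:X) δ := by
  intro y hy
  obtain ⟨s, hs, hds⟩ := Metric.mem_closure_iff.mp hy δ hδ
  rw [Set.mem_add]
  exact ⟨s, hs, y - s, by
    simpa [dist_eq_norm, norm_sub_rev] using le_of_lt hds, by abel⟩

lemma Tset_convex {I : Type*} (K : I → Set X) (c : ℝ) :
    Convex ℝ {g : X →L[ℝ] ℝ | ∃ (s : Finset I) (x : I → (X →L[ℝ] ℝ)),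
      (∀ i ∈ s, x i ∈ dCone (K i)) ∧ g = ∑ i ∈ s, x i ∧ ∑ i ∈ s, ‖x i‖ ≤ c} := by
  classical
  rintro g ⟨s, x, hx, rfl, hxn⟩ g' ⟨s', y, hy, rfl, hyn⟩ a b ha hb hab
  refine ⟨s ∪ s',
    fun i => a • (if i ∈ s then x i else 0) + b • (if i ∈ s' then y i else 0), ?_, ?_, ?_⟩
  · intro i _ k hk
    have h1 : (if i ∈ s then x i else 0) k ≤ 0 := by
      rw [apply_ite (fun f : X →L[ℝ] ℝ => f k)]
      split_ifs with h
      · exact hx i h k hk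
      · simp
    have h2 : (if i ∈ s' then y i else 0) k ≤ 0 := by
      rw [apply_ite (fun f : X →L[ℝ] ℝ => f k)]
      split_ifs with h
      · exact hy i h k hk
      · simp
    simp only [ContinuousLinearMap.add_apply, ContinuousLinearMap.coe_smul',
      Pi.smul_apply, smul_eq_mul]
    linarith [mul_nonpos_of_nonneg_of_nonpos ha h1, mul_nonpos_of_nonneg_of_nonpos hb h2]
  · rw [Finset.sum_add_distrib, ← Finset.smul_sum, ← Finset.smul_sum,
      Finset.sum_ite_mem, Finset.sum_ite_mem,
      Finset.union_inter_cancel_left, Finset.union_inter_cancel_right]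
  · calc ∑ i ∈ s ∪ s', ‖a • (if i ∈ s then x i else 0) + b • (if i ∈ s' then y i else 0)‖
        ≤ ∑ i ∈ s ∪ s',
          (a * ‖(if i ∈ s then x i else 0)‖ + b * ‖(if i ∈ s' then y i else 0)‖) := by
          refine Finset.sum_le_sum fun i _ => ?_
          refine le_trans (norm_add_le _ _) ?_
          have e1 : ‖a • (if i ∈ s then x i else 0)‖ = a * ‖(if i ∈ s then x i else 0)‖ :=
            (norm_smul a ((if i ∈ s then x i else 0) : X →L[ℝ] ℝ)).trans
              (by rw [Real.norm_eq_abs, abs_of_nonneg ha])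
          have e2 : ‖b • (if i ∈ s' then y i else 0)‖ = b * ‖(if i ∈ s' then y i else 0)‖ :=
            (norm_smul b ((if i ∈ s' then y i else 0) : X →L[ℝ] ℝ)).trans
              (by rw [Real.norm_eq_abs, abs_of_nonneg hb])
          rw [e1, e2]
      _ = a * (∑ i ∈ s, ‖x i‖) + b * (∑ i ∈ s', ‖y i‖) := by
          rw [Finset.sum_add_distrib, ← Finset.mul_sum, ← Finset.mul_sum]
          congr 1
          · congr 1
            simp only [apply_ite norm, norm_zero]
            rw [Finset.sum_ite_mem, Finset.union_inter_cancel_left]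
          · congr 1
            simp only [apply_ite norm, norm_zero]
            rw [Finset.sum_ite_mem, Finset.union_inter_cancel_right]
      _ ≤ a * c + b * c :=
          add_le_add (mul_le_mul_of_nonneg_left hxn ha) (mul_le_mul_of_nonneg_left hyn hb)
      _ = c := by rw [← add_mul, hab, one_mul]

lemma finSums_convex {I : Type*} (K : I → Set X) :
    Convex ℝ (finSums (fun i => dCone (K i))) := by
  classical
  rintro g ⟨s, x, hx, rfl⟩ g' ⟨s', y, hy, rfl⟩ a b ha hb _
  refine ⟨s ∪ s',
    fun i => a • (if i ∈ s then x i else 0) + b • (if i ∈ s' then y i else 0), ?_, ?_⟩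
  · intro i _ k hk
    have h1 : (if i ∈ s then x i else 0) k ≤ 0 := by
      rw [apply_ite (fun f : X →L[ℝ] ℝ => f k)]
      split_ifs with h
      · exact hx i h k hk
      · simp
    have h2 : (if i ∈ s' then y i else 0) k ≤ 0 := by
      rw [apply_ite (fun f : X →L[ℝ] ℝ => f k)]
      split_ifs with h
      · exact hy i h k hk
      · simp
    simp only [ContinuousLinearMap.add_apply, ContinuousLinearMap.coe_smul',
      Pi.smul_apply, smul_eq_mul]
    linarith [mul_nonpos_of_nonneg_of_nonpos ha h1, mul_nonpos_of_nonneg_of_nonpos hb h2]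
  · rw [Finset.sum_add_distrib, ← Finset.smul_sum, ← Finset.smul_sum,
      Finset.sum_ite_mem, Finset.sum_ite_mem,
      Finset.union_inter_cancel_left, Finset.union_inter_cancel_right]

end Helpers

theorem stmt15 {X : Type*} [NormedAddCommGroup X] [NormedSpace ℝ X] [CompleteSpace X]
    {I : Type*} [Nonempty I] (K : I → Set X)
    (hcone_smul : ∀ i, ∀ t : ℝ, 0 ≤ t → t • K i ⊆ K i)
    (hcone_add : ∀ i, K i + K i ⊆ K i) (h0 : ∀ i, (0 : X) ∈ K i) :
    (∃ η > (0:ℝ),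
        (⋂ i, (K i + η • closedBall (0:X) 1)) ⊆ (⋂ i, K i) + closedBall (0:X) 1) ↔
      (closure (⋂ i, K i) = (⋂ i, closure (K i)) ∧
        ∃ η > (0:ℝ), propG (fun i => dCone (K i)) η) := by
  classical
  have hKconv : ∀ i, Convex ℝ (K i) := by
    intro i p hp q hq a b ha hb hab
    exact hcone_add i (Set.add_mem_add (hcone_smul i a ha (Set.smul_mem_smul_set hp))
      (hcone_smul i b hb (Set.smul_mem_smul_set hq)))
  have hsmball : ∀ r : ℝ, 0 < r → r • closedBall (0:X) 1 = closedBall (0:X) r := by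
    intro r hr
    rw [_root_.smul_closedBall _ _ zero_le_one]
    simp [abs_of_pos hr]
  constructor
  · -- normality ⇒ CIP ∧ (G_{η/2})
    rintro ⟨η, hη, hnorm⟩
    rw [hsmball η hη] at hnorm
    set η2 := η / 2 with hη2def
    have hη2 : 0 < η2 := by positivity
    -- scaled normality
    have hscale : ∀ δ : ℝ, 0 < δ →
        (⋂ i, (K i + closedBall (0:X) (δ * η))) ⊆ (⋂ i, K i) + closedBall (0:X) δ := by
      intro δ hδ y hy
      have h1 : δ⁻¹ • y ∈ ⋂ i, (K i + closedBall (0:X) η) := by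
        rw [Set.mem_iInter]
        intro i
        have := Set.mem_iInter.mp hy i
        obtain ⟨k, hk, c, hc, rfl⟩ := this
        rw [smul_add]
        refine Set.mem_add.mpr ⟨δ⁻¹ • k, hcone_smul i δ⁻¹ (by positivity)
          (Set.smul_mem_smul_set hk), δ⁻¹ • c, ?_, rfl⟩
        rw [mem_closedBall_zero_iff] at hc ⊢
        rw [norm_smul, Real.norm_eq_abs, abs_of_pos (by positivity)]
        rw [inv_mul_le_iff₀ hδ]
        linarith [hc]
      have h2 := hnorm h1
      obtain ⟨k, hk, c, hc, hkc⟩ := Set.mem_add.mp h2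
      have hy2 : y = δ • k + δ • c := by
        have : y = δ • (δ⁻¹ • y) := by
          rw [smul_smul, mul_inv_cancel₀ (ne_of_gt hδ), one_smul]
        rw [this, ← hkc, smul_add]
      rw [hy2]
      refine Set.mem_add.mpr ⟨δ • k, ?_, δ • c, ?_, rfl⟩
      · rw [Set.mem_iInter]
        exact fun i => hcone_smul i δ (le_of_lt hδ)
          (Set.smul_mem_smul_set (Set.mem_iInter.mp hk i))
      · rw [mem_closedBall_zero_iff] at hc ⊢
        rw [norm_smul, Real.norm_eq_abs, abs_of_pos hδ]
        nlinarith [norm_nonneg c]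
    refine ⟨?_, η2, hη2, ?_⟩
    · -- closed intersection property
      apply Set.Subset.antisymm
      · apply Set.subset_iInter
        intro i
        exact closure_mono (Set.iInter_subset _ i)
      · intro x hx
        rw [Metric.mem_closure_iff]
        intro ε hε
        have hδ : 0 < ε / 2 := by positivity
        have hx2 : x ∈ ⋂ i, (K i + closedBall (0:X) ((ε/2) * η)) := by
          rw [Set.mem_iInter]
          intro i
          exact closure_subset_add (by positivity) (Set.mem_iInter.mp hx i)
        obtain ⟨k, hk, c, hc, hkc⟩ := Set.mem_add.mp (hscale (ε/2) hδ hx2)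
        refine ⟨k, hk, ?_⟩
        rw [mem_closedBall_zero_iff] at hc
        rw [dist_eq_norm, ← hkc]
        have : ‖k + c - k‖ = ‖c‖ := by congr 1; abel
        rw [this]
        linarith
    · -- property (G_{η/2})
      intro f hf
      by_cases hf0 : f = 0
      · subst hf0
        rw [mem_wcl_iff]
        intro J ε hε
        exact ⟨0, ⟨∅, fun _ => 0, by simp, by simp, by simp⟩, fun x _ => by simpa using hε⟩
      · have hfpos : 0 < ‖f‖ := norm_pos_iff.mpr hf0
        show f ∈ wcl {g | ∃ (s : Finset I) (x : I → (X →L[ℝ] ℝ)),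
          (∀ i ∈ s, x i ∈ dCone (K i)) ∧ g = ∑ i ∈ s, x i ∧
          ∑ i ∈ s, ‖x i‖ ≤ (1 / η2) * ‖f‖}
        by_contra hfT
        obtain ⟨x₀, u, hu1, hu2⟩ := exists_sep (Tset_convex K ((1 / η2) * ‖f‖)) hfT
        have h0T : (0 : X →L[ℝ] ℝ) ∈ {g | ∃ (s : Finset I) (x : I → (X →L[ℝ] ℝ)),
            (∀ i ∈ s, x i ∈ dCone (K i)) ∧ g = ∑ i ∈ s, x i ∧
            ∑ i ∈ s, ‖x i‖ ≤ (1 / η2) * ‖f‖} :=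
          ⟨∅, fun _ => 0, by simp, by simp, by positivity⟩
        have hu0 : 0 < u := by simpa using hu1 0 h0T
        set x₁ := (‖f‖ / u) • x₀ with hx₁def
        have hcoef : 0 < ‖f‖ / u := by positivity
        have hT1 : ∀ g ∈ {g | ∃ (s : Finset I) (x : I → (X →L[ℝ] ℝ)),
            (∀ i ∈ s, x i ∈ dCone (K i)) ∧ g = ∑ i ∈ s, x i ∧
            ∑ i ∈ s, ‖x i‖ ≤ (1 / η2) * ‖f‖}, g x₁ < ‖f‖ := by
          intro g hg
          rw [hx₁def, map_smul, smul_eq_mul]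
          calc (‖f‖ / u) * g x₀ < (‖f‖ / u) * u := by
                exact mul_lt_mul_of_pos_left (hu1 g hg) hcoef
            _ = ‖f‖ := div_mul_cancel₀ _ (ne_of_gt hu0)
        have hf1 : ‖f‖ < f x₁ := by
          rw [hx₁def, map_smul, smul_eq_mul]
          calc ‖f‖ = (‖f‖ / u) * u := (div_mul_cancel₀ _ (ne_of_gt hu0)).symm
            _ < (‖f‖ / u) * f x₀ := mul_lt_mul_of_pos_left hu2 hcoef
        -- x₁ lies in each closure (K i + closedBall 0 η2)
        have hclaim : ∀ i, x₁ ∈ closure (K i + closedBall (0:X) η2) := by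
          intro i
          apply mem_closure_of_forall_pol
          · exact (hKconv i).add (convex_closedBall _ _)
          · exact Set.mem_add.mpr ⟨0, h0 i, 0, by
              simpa [mem_closedBall_zero_iff] using le_of_lt hη2, by simp⟩
          · intro g hg
            -- g ∈ dCone (K i)
            have hgP : g ∈ dCone (K i) := by
              intro k hk
              by_contra hpos
              push_neg at hpos
              have hmem : (2 / g k) • k + 0 ∈ K i + closedBall (0:X) η2 :=
                Set.mem_add.mpr ⟨(2 / g k) • k,
                  hcone_smul i _ (le_of_lt (div_pos two_pos hpos)) (Set.smul_mem_smul_set hk),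
                  0, by simpa [mem_closedBall_zero_iff] using le_of_lt hη2, rfl⟩
              have := hg _ hmem
              rw [add_zero, map_smul, smul_eq_mul, div_mul_cancel₀ _ (ne_of_gt hpos)] at this
              linarith
            -- ‖g‖ ≤ 1/η2
            have hgnorm : ∀ y : X, g y ≤ (1/η2) * ‖y‖ := by
              intro y
              rcases eq_or_ne y 0 with rfl | hy0
              · simp
              · have hny : 0 < ‖y‖ := norm_pos_iff.mpr hy0
                have hmem : (0:X) + (η2 / ‖y‖) • y ∈ K i + closedBall (0:X) η2 :=
                  Set.mem_add.mpr ⟨0, h0 i, (η2 / ‖y‖) • y, by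
                    rw [mem_closedBall_zero_iff, norm_smul, Real.norm_eq_abs,
                      abs_of_pos (by positivity), div_mul_cancel₀ _ (ne_of_gt hny)], rfl⟩
                have := hg _ hmem
                rw [zero_add, map_smul, smul_eq_mul] at this
                rw [div_mul_eq_mul_div, div_le_one hny] at this
                calc g y = (1/η2) * (η2 * g y) := by
                      field_simp
                  _ ≤ (1/η2) * ‖y‖ := by
                      apply mul_le_mul_of_nonneg_left this (by positivity)
            -- ‖f‖ • g belongs to the bounded-sum set
            have hgT : (‖f‖ • g) ∈ {g | ∃ (s : Finset I) (x : I → (X →L[ℝ] ℝ)),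
                (∀ i ∈ s, x i ∈ dCone (K i)) ∧ g = ∑ i ∈ s, x i ∧
                ∑ i ∈ s, ‖x i‖ ≤ (1 / η2) * ‖f‖} := by
              refine ⟨{i}, fun _ => ‖f‖ • g, ?_, by rw [Finset.sum_singleton], ?_⟩
              · intro j hj k hk
                rw [Finset.mem_singleton] at hj
                subst hj
                have := hgP k hk
                simp only [ContinuousLinearMap.coe_smul', Pi.smul_apply, smul_eq_mul]
                exact mul_nonpos_of_nonneg_of_nonpos (norm_nonneg f) this
              · rw [Finset.sum_singleton]
                have e1 : ‖(‖f‖ • g)‖ = ‖f‖ * ‖g‖ :=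
                  (norm_smul ‖f‖ g).trans (by rw [Real.norm_eq_abs, abs_of_nonneg (norm_nonneg f)])
                rw [e1]
                have hgn : ‖g‖ ≤ 1/η2 := by
                  apply ContinuousLinearMap.opNorm_le_bound _ (by positivity)
                  intro y
                  rw [Real.norm_eq_abs, abs_le]
                  constructor
                  · have h5 := hgnorm (-y)
                    rw [map_neg, norm_neg] at h5
                    simp only [one_div] at h5 ⊢
                    linarith
                  · exact hgnorm y
                calc ‖f‖ * ‖g‖ ≤ ‖f‖ * (1/η2) := by
                      exact mul_le_mul_of_nonneg_left hgn (norm_nonneg f)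
                  _ = (1/η2) * ‖f‖ := mul_comm _ _
            have := hT1 _ hgT
            simp only [ContinuousLinearMap.coe_smul', Pi.smul_apply, smul_eq_mul] at this
            nlinarith
        -- hence x₁ ∈ ⋂ (K i + closedBall 0 η)
        have hx₁mem : x₁ ∈ ⋂ i, (K i + closedBall (0:X) η) := by
          rw [Set.mem_iInter]
          intro i
          have h1 := closure_subset_add hη2 (hclaim i)
          obtain ⟨p, hp, c, hc, hpc⟩ := Set.mem_add.mp h1
          obtain ⟨k, hk, c', hc', rfl⟩ := Set.mem_add.mp hp
          rw [← hpc]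
          refine Set.mem_add.mpr ⟨k, hk, c' + c, ?_, by abel⟩
          rw [mem_closedBall_zero_iff] at hc hc' ⊢
          calc ‖c' + c‖ ≤ ‖c'‖ + ‖c‖ := norm_add_le _ _
            _ ≤ η2 + η2 := add_le_add hc' hc
            _ = η := by rw [hη2def]; ring
        obtain ⟨k, hk, b, hb, hkb⟩ := Set.mem_add.mp (hnorm hx₁mem)
        have hfk : f k ≤ 0 := by
          apply eval_le_of_mem_wcl hf
          rintro g ⟨s, xs, hxs, rfl⟩
          rw [ContinuousLinearMap.sum_apply]
          apply Finset.sum_nonpos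
          intro i hi
          exact hxs i hi k (Set.mem_iInter.mp hk i)
        have hfb : f b ≤ ‖f‖ := by
          rw [mem_closedBall_zero_iff] at hb
          calc f b ≤ |f b| := le_abs_self _
            _ ≤ ‖f‖ * ‖b‖ := by
                rw [← Real.norm_eq_abs]; exact f.le_opNorm b
            _ ≤ ‖f‖ * 1 := mul_le_mul_of_nonneg_left hb (norm_nonneg f)
            _ = ‖f‖ := mul_one _
        have : f x₁ ≤ ‖f‖ := by
          rw [← hkb, map_add]
          linarith
        linarith
  · -- CIP ∧ (G_η) ⇒ normality with η/2
    rintro ⟨hCIP, η, hη, hG⟩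
    refine ⟨η/2, by positivity, ?_⟩
    rw [hsmball (η/2) (by positivity)]
    intro x hx
    by_contra hxn
    have hxU : x ∉ (⋂ i, K i) + Metric.ball (0:X) 1 := by
      intro h
      obtain ⟨k, hk, b, hb, hkb⟩ := Set.mem_add.mp h
      exact hxn (Set.mem_add.mpr ⟨k, hk, b, Metric.ball_subset_closedBall hb, hkb⟩)
    have hUopen : IsOpen ((⋂ i, K i) + Metric.ball (0:X) 1) := isOpen_ball.add_left
    have hUconv : Convex ℝ ((⋂ i, K i) + Metric.ball (0:X) 1) :=
      (convex_iInter fun i => hKconv i).add (convex_ball _ _)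
    obtain ⟨f, hf⟩ := geometric_hahn_banach_open_point hUconv hUopen hxU
    set M := f x with hMdef
    have h0U : (0:X) ∈ (⋂ i, K i) + Metric.ball (0:X) 1 :=
      Set.mem_add.mpr ⟨0, Set.mem_iInter.mpr h0, 0, Metric.mem_ball_self one_pos, by simp⟩
    have hM0 : 0 < M := by simpa using hf 0 h0U
    -- f ≤ 0 on ⋂ K i
    have hf0 : ∀ k ∈ ⋂ i, K i, f k ≤ 0 := by
      intro k hk
      by_contra hpos
      push_neg at hpos
      have hmem : ((M + 1) / f k) • k + 0 ∈ (⋂ i, K i) + Metric.ball (0:X) 1 :=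
        Set.mem_add.mpr ⟨((M + 1) / f k) • k, Set.mem_iInter.mpr fun i =>
          hcone_smul i _ (le_of_lt (div_pos (by linarith) hpos))
            (Set.smul_mem_smul_set (Set.mem_iInter.mp hk i)),
          0, Metric.mem_ball_self one_pos, rfl⟩
      have := hf _ hmem
      rw [add_zero, map_smul, smul_eq_mul, div_mul_cancel₀ _ (ne_of_gt hpos)] at this
      linarith
    -- ‖f‖ ≤ M
    have hfleM : ∀ y : X, f y ≤ M * ‖y‖ := by
      intro y
      rcases eq_or_ne y 0 with rfl | hy0
      · simp
      · have hny : 0 < ‖y‖ := norm_pos_iff.mpr hy0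
        apply le_of_forall_pos_lt_add
        intro ε hε
        have hd : 0 < ‖y‖ + ε / M := by positivity
        have hmem : (0:X) + (‖y‖ + ε / M)⁻¹ • y ∈ (⋂ i, K i) + Metric.ball (0:X) 1 := by
          refine Set.mem_add.mpr ⟨0, Set.mem_iInter.mpr h0, (‖y‖ + ε / M)⁻¹ • y, ?_, rfl⟩
          rw [Metric.mem_ball, dist_zero_right, norm_smul, Real.norm_eq_abs,
            abs_of_pos (by positivity)]
          rw [inv_mul_lt_iff₀ hd, mul_one]
          have : 0 < ε / M := by positivity
          linarith
        have := hf _ hmem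
        rw [zero_add, map_smul, smul_eq_mul] at this
        have h2 : f y < M * (‖y‖ + ε / M) := by
          rw [inv_mul_lt_iff₀ hd] at this
          calc f y < (‖y‖ + ε / M) * f x := this
            _ = M * (‖y‖ + ε / M) := by rw [hMdef]; ring
        calc f y < M * (‖y‖ + ε / M) := h2
          _ = M * ‖y‖ + ε := by field_simp
    have hnormle : ‖f‖ ≤ M :=
      ContinuousLinearMap.opNorm_le_bound _ (le_of_lt hM0) (by
        intro y
        rw [Real.norm_eq_abs, abs_le]
        refine ⟨?_, hfleM y⟩
        have h5 := hfleM (-y)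
        rw [map_neg, norm_neg] at h5
        linarith)
    -- f belongs to wcl (finSums dCone)
    have hfwcl : f ∈ wcl (finSums (fun i => dCone (K i))) := by
      by_contra hfw
      obtain ⟨x₀, u, hu1, hu2⟩ := exists_sep (finSums_convex K) hfw
      have h0S : (0 : X →L[ℝ] ℝ) ∈ finSums (fun i => dCone (K i)) :=
        ⟨∅, fun _ => 0, by simp, by simp⟩
      have hu0 : 0 < u := by simpa using hu1 0 h0S
      have hS0 : ∀ g ∈ finSums (fun i => dCone (K i)), g x₀ ≤ 0 := by
        intro g hg
        by_contra hpos
        push_neg at hpos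
        obtain ⟨s, xs, hxs, rfl⟩ := hg
        set t := (u + 1) / (∑ i ∈ s, xs i) x₀ with htdef
        have ht : 0 < t := div_pos (by linarith) hpos
        have hmem : t • (∑ i ∈ s, xs i) ∈ finSums (fun i => dCone (K i)) := by
          refine ⟨s, fun i => t • xs i, ?_, by rw [Finset.smul_sum]⟩
          intro i hi k hk
          simp only [ContinuousLinearMap.coe_smul', Pi.smul_apply, smul_eq_mul]
          exact mul_nonpos_of_nonneg_of_nonpos (le_of_lt ht) (hxs i hi k hk)
        have := hu1 _ hmem
        simp only [ContinuousLinearMap.coe_smul', Pi.smul_apply, smul_eq_mul] at this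
        rw [htdef, div_mul_cancel₀ _ (ne_of_gt hpos)] at this
        linarith
      have hx₀cl : x₀ ∈ closure (⋂ i, K i) := by
        rw [hCIP, Set.mem_iInter]
        intro i
        apply mem_closure_cone_of_dual (hKconv i) (h0 i) (fun t ht => hcone_smul i t ht)
        intro g hg
        apply hS0
        refine ⟨{i}, fun _ => g, ?_, by rw [Finset.sum_singleton]⟩
        intro j hj
        rw [Finset.mem_singleton] at hj
        subst hj
        exact hg
      have hfx₀ : f x₀ ≤ 0 := by
        have hcl : closure (⋂ i, K i) ⊆ {y | f y ≤ 0} :=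
          closure_minimal hf0 (isClosed_le (by fun_prop) continuous_const)
        exact hcl hx₀cl
      linarith
    -- apply property (G)
    have hfG := hG f hfwcl
    obtain ⟨g, hgT, hgx⟩ := mem_wcl_iff.mp hfG {x} (M/4) (by positivity)
    have hgx' := hgx x (Finset.mem_singleton_self x)
    obtain ⟨s, xs, hxs, rfl, hxsn⟩ := hgT
    -- bound (∑ xs) x
    have hbound : (∑ i ∈ s, xs i) x ≤ ‖f‖ / 2 := by
      have hxm : ∀ i, x ∈ K i + closedBall (0:X) (η/2) := fun i => Set.mem_iInter.mp hx i
      have hterm : ∀ i ∈ s, xs i x ≤ ‖xs i‖ * (η/2) := by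
        intro i hi
        obtain ⟨k, hk, c, hc, hkc⟩ := Set.mem_add.mp (hxm i)
        rw [mem_closedBall_zero_iff] at hc
        have h1 : xs i k ≤ 0 := hxs i hi k hk
        have h2 : xs i c ≤ ‖xs i‖ * (η/2) := by
          calc xs i c ≤ |xs i c| := le_abs_self _
            _ ≤ ‖xs i‖ * ‖c‖ := by rw [← Real.norm_eq_abs]; exact (xs i).le_opNorm c
            _ ≤ ‖xs i‖ * (η/2) := mul_le_mul_of_nonneg_left hc (norm_nonneg _)
        calc xs i x = xs i k + xs i c := by rw [← hkc, map_add]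
          _ ≤ ‖xs i‖ * (η/2) := by linarith
      calc (∑ i ∈ s, xs i) x = ∑ i ∈ s, xs i x := by
            rw [ContinuousLinearMap.sum_apply]
        _ ≤ ∑ i ∈ s, ‖xs i‖ * (η/2) := Finset.sum_le_sum hterm
        _ = (∑ i ∈ s, ‖xs i‖) * (η/2) := by rw [← Finset.sum_mul]
        _ ≤ ((1/η) * ‖f‖) * (η/2) :=
            mul_le_mul_of_nonneg_right hxsn (by positivity)
        _ = ‖f‖ / 2 := by field_simp
    rw [abs_lt] at hgx'
    have : M < M/2 + M/4 := by
      have h1 : f x < (∑ i ∈ s, xs i) x + M/4 := by linarith [hgx'.1]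
      have h2 : ‖f‖ / 2 ≤ M / 2 := by linarith
      linarith [hbound]
    linarith
end

section
/- Let {A_i : i ∈ I} be a family of convex subsets of a Banach space X with nonempty intersection A. If {A_i} has the strong CHIP at every x ∈ A (i.e. N(A, x) = Σ_{i∈I} N(A_i, x)), then for every x ∈ A the family of cones {cone(A_i − x) : i ∈ I} has the weak normal property. -/
open Set Metric
open scoped Pointwise

theorem stmt16 {X : Type*} [NormedAddCommGroup X] [NormedSpace ℝ X] [CompleteSpace X]
    {I : Type*} [Nonempty I] (A : I → Set X) (hconv : ∀ i, Convex ℝ (A i))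
    (hne : (⋂ i, A i).Nonempty)
    (hschip : ∀ x ∈ ⋂ i, A i, ncone (⋂ i, A i) x = finSums (fun i => ncone (A i) x)) :
    ∀ x ∈ ⋂ i, A i, ∀ f : X →L[ℝ] ℝ, ∃ η > (0:ℝ),
      (⋂ i, (coneHull (A i - {x}) + η • closedBall (0:X) 1)) ⊆
        closure ((⋂ i, coneHull (A i - {x})) + {z : X | f z ≤ 1}) := by
  intro x hx f
  obtain ⟨a0, ha0⟩ := hne
  have hzeroC : (0 : X) ∈ ⋂ i, coneHull (A i - {x}) := by
    refine Set.mem_iInter.mpr fun i => ⟨0, le_refl 0, a0 - x, ?_, (zero_smul ℝ _).symm⟩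
    exact Set.sub_mem_sub (Set.mem_iInter.mp ha0 i) rfl
  by_cases hcase : ∀ c ∈ ⋂ i, A i, f (c - x) ≤ 0
  · -- f is in the normal cone of the intersection; use strong CHIP
    have hf : f ∈ finSums (fun i => ncone (A i) x) := by
      rw [← hschip x hx]; exact hcase
    obtain ⟨s, xf, hxf, hsum⟩ := hf
    set M := ∑ i ∈ s, ‖xf i‖ with hM
    have hM0 : (0:ℝ) ≤ M := Finset.sum_nonneg fun i _ => norm_nonneg _
    have hη : (0:ℝ) < 1 / (M + 1) := by positivity
    refine ⟨1 / (M + 1), hη, ?_⟩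
    intro z hz
    apply subset_closure
    refine ⟨0, hzeroC, z, ?_, zero_add z⟩
    have hbound : ∀ i ∈ s, xf i z ≤ (1 / (M + 1)) * ‖xf i‖ := by
      intro i hi
      obtain ⟨k, hk, w, hw, hkw⟩ := Set.mem_iInter.mp hz i
      obtain ⟨t, ht, u, hu, rfl⟩ := hk
      obtain ⟨b, hb, rfl⟩ := hw
      obtain ⟨a, ha, y, hy, rfl⟩ := hu
      have h1 : xf i (t • (a - y)) ≤ 0 := by
        rw [map_smul, smul_eq_mul]
        have : xf i (a - y) ≤ 0 := by
          rw [Set.mem_singleton_iff] at hy; subst hy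
          exact hxf i hi a ha
        exact mul_nonpos_of_nonneg_of_nonpos ht this
      have h2 : xf i ((1 / (M + 1)) • b) ≤ (1 / (M + 1)) * ‖xf i‖ := by
        calc xf i ((1 / (M + 1)) • b) ≤ ‖xf i ((1 / (M + 1)) • b)‖ := le_abs_self _
          _ ≤ ‖xf i‖ * ‖(1 / (M + 1)) • b‖ := (xf i).le_opNorm _
          _ = ‖xf i‖ * ((1 / (M + 1)) * ‖b‖) := by
              rw [norm_smul, Real.norm_eq_abs, abs_of_pos hη]
          _ ≤ ‖xf i‖ * ((1 / (M + 1)) * 1) := by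
              have : ‖b‖ ≤ 1 := by simpa using mem_closedBall_iff_norm.mp hb
              gcongr
          _ = (1 / (M + 1)) * ‖xf i‖ := by ring
      calc xf i z = xf i (t • (a - y)) + xf i ((1 / (M + 1)) • b) := by rw [← hkw, map_add]
        _ ≤ 0 + (1 / (M + 1)) * ‖xf i‖ := add_le_add h1 h2
        _ = (1 / (M + 1)) * ‖xf i‖ := zero_add _
    have : f z ≤ (1 / (M + 1)) * M := by
      rw [hsum]
      simp only [ContinuousLinearMap.coe_sum', Finset.sum_apply]
      calc (∑ i ∈ s, xf i z) ≤ ∑ i ∈ s, (1 / (M + 1)) * ‖xf i‖ :=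
            Finset.sum_le_sum hbound
        _ = (1 / (M + 1)) * M := by rw [← Finset.mul_sum]
    have hlt : (1 / (M + 1)) * M ≤ 1 := by
      rw [div_mul_eq_mul_div, one_mul, div_le_one (by linarith)]
      linarith
    exact le_trans this hlt
  · -- some direction in the cone has f > 0; the RHS is everything
    push_neg at hcase
    obtain ⟨c, hc, hfc⟩ := hcase
    refine ⟨1, one_pos, ?_⟩
    intro z _
    apply subset_closure
    set t : ℝ := max 0 ((f z - 1) / f (c - x)) with hts
    have hmem1 : t • (c - x) ∈ ⋂ i, coneHull (A i - {x}) := by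
      refine Set.mem_iInter.mpr fun i => ⟨t, le_max_left _ _, c - x, ?_, rfl⟩
      exact Set.sub_mem_sub (Set.mem_iInter.mp hc i) rfl
    have hmem2 : z - t • (c - x) ∈ {z : X | f z ≤ 1} := by
      have : f (z - t • (c - x)) = f z - t * f (c - x) := by
        rw [map_sub, map_smul, smul_eq_mul]
      rw [Set.mem_setOf_eq, this, sub_le_iff_le_add]
      have ht : (f z - 1) / f (c - x) ≤ t := le_max_right _ _
      have := (div_le_iff₀ hfc).mp ht
      linarith
    exact Set.mem_add.mpr ⟨t • (c - x), hmem1, z - t • (c - x), hmem2, by abel⟩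
end

section
/- A family {A_i : i ∈ I} of convex subsets of a Banach space X with nonempty intersection A has the linear regularity property (there exists γ > 0 with d(x, A) ≤ γ·sup_{i∈I} d(x, A_i) for all x ∈ X) if and only if it has the uniform normal property (there exists η > 0 with ⋂_i (A_i + η·δ·B_X) ⊆ A + δ·B_X for all δ > 0). -/
open Set Metric
open scoped Pointwise

theorem stmt17 {X : Type*} [NormedAddCommGroup X] [NormedSpace ℝ X] [CompleteSpace X]
    {I : Type*} [Nonempty I] (A : I → Set X) (hconv : ∀ i, Convex ℝ (A i))
    (hne : (⋂ i, A i).Nonempty) :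
    (∃ γ > (0:ℝ), ∀ x : X, ∀ c : ℝ,
        (∀ i, infDist x (A i) ≤ c) → infDist x (⋂ i, A i) ≤ γ * c) ↔
      (∃ η > (0:ℝ), ∀ δ > (0:ℝ),
        (⋂ i, (A i + (η * δ) • closedBall (0:X) 1)) ⊆
          (⋂ i, A i) + δ • closedBall (0:X) 1) := by
  constructor
  · rintro ⟨γ, hγ, hlin⟩
    refine ⟨1 / (2 * γ), by positivity, fun δ hδ x hx => ?_⟩
    have hdi : ∀ i, infDist x (A i) ≤ 1 / (2 * γ) * δ := by
      intro i
      have := mem_iInter.1 hx i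
      rw [Set.mem_add] at this
      obtain ⟨a, ha, b, hb, hab⟩ := this
      obtain ⟨y, hy, rfl⟩ := hb
      have hy' : ‖(1 / (2 * γ) * δ) • y‖ ≤ 1 / (2 * γ) * δ := by
        rw [norm_smul]
        calc ‖(1 / (2 * γ) * δ)‖ * ‖y‖ ≤ ‖(1 / (2 * γ) * δ)‖ * 1 := by
              exact mul_le_mul_of_nonneg_left (mem_closedBall_zero_iff.1 hy) (norm_nonneg _)
          _ = |1 / (2 * γ) * δ| := by rw [mul_one]; rfl
          _ = 1 / (2 * γ) * δ := abs_of_pos (by positivity)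
      calc infDist x (A i) ≤ dist x a := infDist_le_dist_of_mem ha
        _ = ‖(1 / (2 * γ) * δ) • y‖ := by
            rw [dist_eq_norm, ← hab]; simp
        _ ≤ 1 / (2 * γ) * δ := hy'
    have h1 : infDist x (⋂ i, A i) ≤ γ * (1 / (2 * γ) * δ) := hlin x _ hdi
    have h2 : γ * (1 / (2 * γ) * δ) = δ / 2 := by field_simp
    have h3 : infDist x (⋂ i, A i) < δ :=
      lt_of_le_of_lt (h1.trans_eq h2) (by linarith)
    obtain ⟨a, ha, hda⟩ := (infDist_lt_iff hne).1 (by linarith [h1.trans_eq h2] : infDist x (⋂ i, A i) < δ)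
    rw [Set.mem_add]
    refine ⟨a, ha, x - a, ?_, by abel⟩
    refine ⟨δ⁻¹ • (x - a), ?_, smul_inv_smul₀ hδ.ne' (x - a)⟩
    rw [mem_closedBall_zero_iff, norm_smul, norm_inv, Real.norm_eq_abs,
      abs_of_pos hδ]
    rw [inv_mul_le_iff₀ (by linarith), mul_one, ← dist_eq_norm]
    exact hda.le
  · rintro ⟨η, hη, hnorm⟩
    refine ⟨1 / η, by positivity, fun x c hc => ?_⟩
    have hc0 : 0 ≤ c := le_trans (infDist_nonneg) (hc (Classical.arbitrary I))
    have key : ∀ ε > (0:ℝ), infDist x (⋂ i, A i) ≤ 1 / η * c + ε := by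
      intro ε hε
      set δ := 1 / η * c + ε with hδdef
      have hδ : 0 < δ := by positivity
      have hηδ : c < η * δ := by
        rw [hδdef]
        have : η * (1 / η * c + ε) = c + η * ε := by field_simp
        rw [this]; nlinarith
      have hx : x ∈ ⋂ i, (A i + (η * δ) • closedBall (0:X) 1) := by
        refine mem_iInter.2 fun i => ?_
        have hAine : (A i).Nonempty := hne.mono (Set.iInter_subset _ i)
        obtain ⟨a, ha, hda⟩ := (infDist_lt_iff hAine).1 ((hc i).trans_lt hηδ)
        rw [Set.mem_add]
        refine ⟨a, ha, x - a, ?_, by abel⟩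
        refine ⟨(η * δ)⁻¹ • (x - a), ?_,
          smul_inv_smul₀ (by positivity : (0:ℝ) < η * δ).ne' (x - a)⟩
        rw [mem_closedBall_zero_iff, norm_smul, norm_inv, Real.norm_eq_abs,
          abs_of_pos (by positivity), inv_mul_le_iff₀ (by positivity), mul_one,
          ← dist_eq_norm]
        exact hda.le
      obtain ⟨a, ha, b, hb, hab⟩ := Set.mem_add.1 (hnorm δ hδ hx)
      obtain ⟨y, hy, rfl⟩ := hb
      calc infDist x (⋂ i, A i) ≤ dist x a := infDist_le_dist_of_mem ha
        _ = ‖δ • y‖ := by rw [dist_eq_norm, ← hab]; simp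
        _ ≤ δ := by
            rw [norm_smul, Real.norm_eq_abs, abs_of_pos hδ]
            nlinarith [mem_closedBall_zero_iff.1 hy, norm_nonneg y]
    exact le_of_forall_pos_le_add key
end
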